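/- arXiv:math/0506063 — 7 statements merged into one kernel-verified Lean document; each statement's English description precedes it below -/
import Mathlib

section
/- Let f and g be commuting orientation-preserving homeomorphisms of [0,1), with f a C^{1+bv} diffeomorphism (derivative of bounded variation on compact subintervals of [0,1)) and g a C^1 diffeomorphism. If f has no fixed point in (0,1) and g has a fixed point in (0,1), then g is the identity. (Kopell's Lemma.) -/
open Set Filter


/-- Bounded variation gives a uniform bound on sums over monotone sequences. -/
lemma bv_sum_bound {φ : ℝ → ℝ} {s : Set ℝ} (h : BoundedVariationOn φ s) :
    ∃ V : ℝ, ∀ (m : ℕ) (u : ℕ → ℝ), Monotone u → (∀ i, u i ∈ s) →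
      ∑ i ∈ Finset.range m, |φ (u (i+1)) - φ (u i)| ≤ V := by
  refine ⟨(eVariationOn φ s).toReal, fun m u hu us => ?_⟩
  have key := eVariationOn.sum_le (f := φ) (n := m) hu us
  have hsum : ∑ i ∈ Finset.range m, edist (φ (u (i+1))) (φ (u i))
      = ENNReal.ofReal (∑ i ∈ Finset.range m, |φ (u (i+1)) - φ (u i)|) := by
    rw [ENNReal.ofReal_sum_of_nonneg (fun i _ => abs_nonneg _)]
    refine Finset.sum_congr rfl fun i _ => ?_
    rw [edist_dist, Real.dist_eq]
  rw [hsum] at key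
  have := ENNReal.toReal_mono h (key)
  rwa [ENNReal.toReal_ofReal (Finset.sum_nonneg fun i _ => abs_nonneg _)] at this

lemma strictMonoOn_iterate {F : ℝ → ℝ} (hm : StrictMonoOn F (Ico 0 1))
    (hmaps : MapsTo F (Ico 0 1) (Ico 0 1)) (n : ℕ) : StrictMonoOn (F^[n]) (Ico 0 1) := by
  induction n with
  | zero => simpa using strictMonoOn_id
  | succ n ih =>
    intro x hx y hy hxy
    rw [Function.iterate_succ_apply, Function.iterate_succ_apply]
    exact ih (hmaps hx) (hmaps hy) (hm hx hy hxy)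

lemma comm_iterate {F g : ℝ → ℝ} (hmaps : MapsTo F (Ico 0 1) (Ico 0 1))
    (hcomm : ∀ x ∈ Ico (0:ℝ) 1, F (g x) = g (F x)) (m : ℕ) :
    ∀ x ∈ Ico (0:ℝ) 1, F^[m] (g x) = g (F^[m] x) := by
  induction m with
  | zero => simp
  | succ m ih =>
    intro x hx
    rw [Function.iterate_succ_apply', Function.iterate_succ_apply', ih x hx]
    exact hcomm _ (hmaps.iterate m hx)

/-- If `F` is continuous at interior points, maps `[0,1)` to itself, fixes 0 and
`F x < x` on `(0,1)`, then iterates tend to 0. -/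
lemma tendsto_iterate_zero {F : ℝ → ℝ}
    (hF0 : F 0 = 0)
    (hmaps : MapsTo F (Ico 0 1) (Ico 0 1))
    (hcont : ∀ x ∈ Ioo (0:ℝ) 1, ContinuousAt F x)
    (hlt : ∀ x ∈ Ioo (0:ℝ) 1, F x < x)
    {x : ℝ} (hx : x ∈ Ico (0:ℝ) 1) :
    Tendsto (fun n => F^[n] x) atTop (nhds 0) := by
  have hmem : ∀ n, F^[n] x ∈ Ico (0:ℝ) 1 := fun n => hmaps.iterate n hx
  have hle : ∀ y ∈ Ico (0:ℝ) 1, F y ≤ y := by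
    intro y hy
    rcases eq_or_lt_of_le hy.1 with h | h
    · rw [← h, hF0]
    · exact (hlt y ⟨h, hy.2⟩).le
  have hanti : Antitone fun n => F^[n] x := by
    apply antitone_nat_of_succ_le
    intro n
    rw [Function.iterate_succ_apply']
    exact hle _ (hmem n)
  have hbdd : BddBelow (range fun n => F^[n] x) :=
    ⟨0, by rintro y ⟨n, rfl⟩; exact (hmem n).1⟩
  have htend := tendsto_atTop_ciInf hanti hbdd
  set L := ⨅ n, F^[n] x with hL
  have hL0 : 0 ≤ L := le_ciInf fun n => (hmem n).1
  rcases eq_or_lt_of_le hL0 with h | h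
  · rwa [← h] at htend
  · exfalso
    have hL1 : L < 1 := lt_of_le_of_lt (ciInf_le hbdd 0) (by simpa using hx.2)
    have hcL : ContinuousAt F L := hcont L ⟨h, hL1⟩
    have h2 : Tendsto (fun n => F (F^[n] x)) atTop (nhds (F L)) := hcL.tendsto.comp htend
    have h3 : Tendsto (fun n => F^[n+1] x) atTop (nhds L) := htend.comp (tendsto_add_atTop_nat 1)
    have h4 : F L = L := tendsto_nhds_unique (by simpa [Function.iterate_succ_apply'] using h2) h3
    exact absurd h4 (ne_of_lt (hlt L ⟨h, hL1⟩))

/-- Chain rule for iterates. -/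
lemma hasDerivAt_iterate {F F' : ℝ → ℝ}
    (hmaps : MapsTo F (Ioo 0 1) (Ioo 0 1))
    (hderiv : ∀ x ∈ Ioo (0:ℝ) 1, HasDerivAt F (F' x) x) (m : ℕ) :
    ∀ x ∈ Ioo (0:ℝ) 1, HasDerivAt (F^[m]) (∏ k ∈ Finset.range m, F' (F^[k] x)) x := by
  induction m with
  | zero => intro x hx; simpa using hasDerivAt_id x
  | succ m ih =>
    intro x hx
    have h1 : HasDerivAt (F^[m] ∘ F) ((∏ k ∈ Finset.range m, F' (F^[k] (F x))) * F' x) x :=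
      (ih (F x) (hmaps hx)).comp x (hderiv x hx)
    have h2 : (∏ k ∈ Finset.range m, F' (F^[k] (F x))) * F' x
        = ∏ k ∈ Finset.range (m+1), F' (F^[k] x) := by
      rw [Finset.prod_range_succ']
      simp only [Function.iterate_succ_apply, Function.iterate_zero_apply]
    rw [h2] at h1
    rwa [← Function.iterate_succ] at h1

lemma iterate_le_self {F : ℝ → ℝ} (hmaps : MapsTo F (Ico 0 1) (Ico 0 1))
    (hle : ∀ z ∈ Ico (0:ℝ) 1, F z ≤ z) {b : ℝ} (hb : b ∈ Ico (0:ℝ) 1) (i : ℕ) :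
    F^[i] b ≤ b := by
  induction i with
  | zero => simp
  | succ i ih =>
    rw [Function.iterate_succ_apply']
    exact le_trans (hle _ (hmaps.iterate i hb)) ih

lemma distortion_sum {F F' : ℝ → ℝ} {b V : ℝ} (hb : b ∈ Ioo (0:ℝ) 1)
    (hmono : StrictMonoOn F (Ico 0 1)) (hmaps : MapsTo F (Ico 0 1) (Ico 0 1))
    (hF0 : F 0 = 0) (hle : ∀ z ∈ Ico (0:ℝ) 1, F z ≤ z)
    (hV : ∀ (m : ℕ) (u : ℕ → ℝ), Monotone u → (∀ i, u i ∈ Ioc 0 b) →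
      ∑ i ∈ Finset.range m, |Real.log (F' (u (i+1))) - Real.log (F' (u i))| ≤ V)
    {x y : ℝ} (hx : x ∈ Icc (F b) b) (hy : y ∈ Icc (F b) b) (m : ℕ) :
    ∑ k ∈ Finset.range m, |Real.log (F' (F^[k] x)) - Real.log (F' (F^[k] y))| ≤ V := by
  have hbI : b ∈ Ico (0:ℝ) 1 := ⟨hb.1.le, hb.2⟩
  have hFb : 0 < F b := by
    have := hmono (left_mem_Ico.2 (by norm_num)) hbI hb.1
    rwa [hF0] at this
  set p := min x y with hp
  set q := max x y with hq
  have hpI : p ∈ Icc (F b) b := ⟨le_min hx.1 hy.1, min_le_of_left_le hx.2⟩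
  have hqI : q ∈ Icc (F b) b := ⟨le_max_of_le_left hx.1, max_le hx.2 hy.2⟩
  have hpq : p ≤ q := min_le_max
  have hmem : ∀ z ∈ Icc (F b) b, z ∈ Ico (0:ℝ) 1 :=
    fun z hz => ⟨le_trans hFb.le hz.1, lt_of_le_of_lt hz.2 hb.2⟩
  -- all iterates of points of [F b, b] lie in (0, b]
  have hiter : ∀ (i : ℕ), ∀ z ∈ Icc (F b) b, F^[i] z ∈ Ioc (0:ℝ) b := by
    intro i z hz
    constructor
    · have h0 : F^[i] 0 = 0 := Function.iterate_fixed hF0 i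
      have := strictMonoOn_iterate hmono hmaps i (left_mem_Ico.2 (by norm_num)) (hmem z hz)
        (lt_of_lt_of_le hFb hz.1)
      rwa [h0] at this
    · calc F^[i] z ≤ F^[i] b :=
            (strictMonoOn_iterate hmono hmaps i).monotoneOn (hmem z hz) hbI hz.2
        _ ≤ b := iterate_le_self hmaps hle hbI i
  -- the interleaved sequence
  set φ : ℝ → ℝ := fun z => Real.log (F' z) with hφ
  set u : ℕ → ℝ := fun j => if j < 2*m then F^[m - 1 - j/2] (if j % 2 = 0 then p else q) else b
    with hu
  have humem : ∀ j, u j ∈ Ioc 0 b := by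
    intro j
    rw [hu]
    dsimp only
    split
    · split
      · exact hiter _ p hpI
      · exact hiter _ q hqI
    · exact ⟨hb.1, le_refl b⟩
  have humono : Monotone u := by
    apply monotone_nat_of_le_succ
    intro j
    rcases lt_or_ge (j+1) (2*m) with h1 | h1
    · have h0 : j < 2*m := by omega
      by_cases hj2 : j % 2 = 0
      · -- j = 2k even : F^[m-1-k] p ≤ F^[m-1-k] q
        have hj12 : (j+1) % 2 ≠ 0 := by omega
        have hd : (j+1)/2 = j/2 := by omega
        rw [hu]
        dsimp only
        rw [if_pos h0, if_pos h1, if_pos hj2, if_neg hj12, hd]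
        exact (strictMonoOn_iterate hmono hmaps _).monotoneOn (hmem p hpI) (hmem q hqI) hpq
      · -- j = 2k+1 odd : F^[m-1-k] q ≤ F^[m-2-k] p
        have hj12 : (j+1) % 2 = 0 := by omega
        have hd : m - 1 - j/2 = (m - 1 - (j+1)/2) + 1 := by omega
        rw [hu]
        dsimp only
        rw [if_pos h0, if_pos h1, if_neg hj2, if_pos hj12, hd,
          Function.iterate_succ_apply]
        have hFq : F q ≤ p := by
          calc F q ≤ F b := hmono.monotoneOn (hmem q hqI) hbI hqI.2
            _ ≤ p := hpI.1
        exact (strictMonoOn_iterate hmono hmaps _).monotoneOn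
          (hmaps (hmem q hqI)) (hmem p hpI) hFq
    · -- beyond the range
      rcases lt_or_ge j (2*m) with h0 | h0
      · -- j = 2m - 1
        have hj2 : j % 2 ≠ 0 := by omega
        have hd : m - 1 - j/2 = 0 := by omega
        rw [hu]
        dsimp only
        rw [if_pos h0, if_neg (by omega : ¬ (j+1 < 2*m)), if_neg hj2, hd]
        simpa using hqI.2
      · rw [hu]
        dsimp only
        rw [if_neg (by omega : ¬ (j < 2*m)), if_neg (by omega : ¬ (j+1 < 2*m))]
  -- rewrite target via reflection
  have hre : ∑ k ∈ Finset.range m, |φ (F^[k] x) - φ (F^[k] y)|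
      = ∑ k ∈ Finset.range m, |φ (u (2*k+1)) - φ (u (2*k))| := by
    have h1 : ∀ k, |φ (F^[k] x) - φ (F^[k] y)| = |φ (F^[k] q) - φ (F^[k] p)| := by
      intro k
      rcases le_total x y with h | h
      · rw [hp, hq, min_eq_left h, max_eq_right h, abs_sub_comm]
      · rw [hp, hq, min_eq_right h, max_eq_left h]
    calc ∑ k ∈ Finset.range m, |φ (F^[k] x) - φ (F^[k] y)|
        = ∑ k ∈ Finset.range m, |φ (F^[k] q) - φ (F^[k] p)| := by
          exact Finset.sum_congr rfl fun k _ => h1 k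
      _ = ∑ k ∈ Finset.range m, |φ (F^[m-1-k] q) - φ (F^[m-1-k] p)| :=
          (Finset.sum_range_reflect (fun k => |φ (F^[k] q) - φ (F^[k] p)|) m).symm
      _ = ∑ k ∈ Finset.range m, |φ (u (2*k+1)) - φ (u (2*k))| := by
          refine Finset.sum_congr rfl fun k hk => ?_
          have hk' : k < m := Finset.mem_range.1 hk
          have e1 : u (2*k) = F^[m-1-k] p := by
            rw [hu]; dsimp only
            rw [if_pos (by omega), if_pos (by omega)]
            congr 1
            omega
          have e2 : u (2*k+1) = F^[m-1-k] q := by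
            rw [hu]; dsimp only
            rw [if_pos (by omega), if_neg (by omega)]
            congr 1
            omega
          rw [e1, e2]
  rw [hre]
  have hstep : ∑ k ∈ Finset.range m, |φ (u (2*k+1)) - φ (u (2*k))|
      ≤ ∑ j ∈ Finset.range (2*m), |φ (u (j+1)) - φ (u j)| := by
    have himg : ∑ k ∈ Finset.range m, |φ (u (2*k+1)) - φ (u (2*k))|
        = ∑ j ∈ (Finset.range m).image (fun k => 2*k), |φ (u (j+1)) - φ (u j)| := by
      rw [Finset.sum_image]
      intro a _ c _ h
      simp only at h
      omega
    rw [himg]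
    apply Finset.sum_le_sum_of_subset_of_nonneg
    · intro j hj
      simp only [Finset.mem_image, Finset.mem_range] at hj ⊢
      omega
    · intro j _ _
      exact abs_nonneg _
  exact le_trans hstep (hV (2*m) u humono humem)
lemma prod_deriv_pos {F F' : ℝ → ℝ} (hF'pos : ∀ z ∈ Ioo (0:ℝ) 1, 0 < F' z)
    {x : ℝ} (hx : ∀ k : ℕ, F^[k] x ∈ Ioo (0:ℝ) 1) (m : ℕ) :
    0 < ∏ k ∈ Finset.range m, F' (F^[k] x) :=
  Finset.prod_pos fun k _ => hF'pos _ (hx k)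

lemma distortion_ratio {F F' : ℝ → ℝ} {b V : ℝ} (hb : b ∈ Ioo (0:ℝ) 1)
    (hmono : StrictMonoOn F (Ico 0 1)) (hmaps : MapsTo F (Ico 0 1) (Ico 0 1))
    (hF0 : F 0 = 0) (hle : ∀ z ∈ Ico (0:ℝ) 1, F z ≤ z)
    (hF'pos : ∀ z ∈ Ioo (0:ℝ) 1, 0 < F' z)
    (hV : ∀ (m : ℕ) (u : ℕ → ℝ), Monotone u → (∀ i, u i ∈ Ioc 0 b) →
      ∑ i ∈ Finset.range m, |Real.log (F' (u (i+1))) - Real.log (F' (u i))| ≤ V)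
    {x y : ℝ} (hx : x ∈ Icc (F b) b) (hy : y ∈ Icc (F b) b) (m : ℕ) :
    Real.exp (-V) * ∏ k ∈ Finset.range m, F' (F^[k] y)
      ≤ ∏ k ∈ Finset.range m, F' (F^[k] x) := by
  have hbI : b ∈ Ico (0:ℝ) 1 := ⟨hb.1.le, hb.2⟩
  have hFb : 0 < F b := by
    have := hmono (left_mem_Ico.2 (by norm_num)) hbI hb.1
    rwa [hF0] at this
  have hmem : ∀ z ∈ Icc (F b) b, z ∈ Ico (0:ℝ) 1 :=
    fun z hz => ⟨le_trans hFb.le hz.1, lt_of_le_of_lt hz.2 hb.2⟩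
  have hiter : ∀ z ∈ Icc (F b) b, ∀ (k : ℕ), F^[k] z ∈ Ioo (0:ℝ) 1 := by
    intro z hz k
    refine ⟨?_, ?_⟩
    · have h0 : F^[k] 0 = 0 := Function.iterate_fixed hF0 k
      have := strictMonoOn_iterate hmono hmaps k (left_mem_Ico.2 (by norm_num)) (hmem z hz)
        (lt_of_lt_of_le hFb hz.1)
      rwa [h0] at this
    · exact (hmaps.iterate k (hmem z hz)).2
  have hPx : 0 < ∏ k ∈ Finset.range m, F' (F^[k] x) :=
    prod_deriv_pos hF'pos (hiter x hx) m
  have hPy : 0 < ∏ k ∈ Finset.range m, F' (F^[k] y) :=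
    prod_deriv_pos hF'pos (hiter y hy) m
  have hlogx : Real.log (∏ k ∈ Finset.range m, F' (F^[k] x))
      = ∑ k ∈ Finset.range m, Real.log (F' (F^[k] x)) :=
    Real.log_prod fun k _ => (hF'pos _ (hiter x hx k)).ne'
  have hlogy : Real.log (∏ k ∈ Finset.range m, F' (F^[k] y))
      = ∑ k ∈ Finset.range m, Real.log (F' (F^[k] y)) :=
    Real.log_prod fun k _ => (hF'pos _ (hiter y hy k)).ne'
  have hsum := distortion_sum hb hmono hmaps hF0 hle hV hx hy m
  have hdiff : |Real.log (∏ k ∈ Finset.range m, F' (F^[k] x))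
      - Real.log (∏ k ∈ Finset.range m, F' (F^[k] y))| ≤ V := by
    rw [hlogx, hlogy, ← Finset.sum_sub_distrib]
    exact le_trans (Finset.abs_sum_le_sum_abs _ _) hsum
  have hge : Real.log (∏ k ∈ Finset.range m, F' (F^[k] y)) - V
      ≤ Real.log (∏ k ∈ Finset.range m, F' (F^[k] x)) := by
    have := abs_le.1 hdiff
    linarith [this.1]
  calc Real.exp (-V) * ∏ k ∈ Finset.range m, F' (F^[k] y)
      = Real.exp (Real.log (∏ k ∈ Finset.range m, F' (F^[k] y)) - V) := by
        rw [sub_eq_add_neg, Real.exp_add, Real.exp_log hPy]; ring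
    _ ≤ Real.exp (Real.log (∏ k ∈ Finset.range m, F' (F^[k] x))) := Real.exp_le_exp.2 hge
    _ = ∏ k ∈ Finset.range m, F' (F^[k] x) := Real.exp_log hPx

lemma deriv_at_zero_eq_one {g : ℝ → ℝ} {d : ℝ} (hg0 : g 0 = 0)
    (hgd : HasDerivWithinAt g d (Ico 0 1) 0)
    {x : ℕ → ℝ} (hx : ∀ n, x n ∈ Ioo (0:ℝ) 1) (hfix : ∀ n, g (x n) = x n)
    (hlim : Tendsto x atTop (nhds 0)) : d = 1 := by
  rw [hasDerivWithinAt_iff_tendsto_slope] at hgd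
  have htend : Tendsto x atTop (nhdsWithin 0 (Ico 0 1 \ {0})) := by
    apply tendsto_nhdsWithin_of_tendsto_nhds_of_eventually_within _ hlim
    exact Eventually.of_forall fun n =>
      ⟨⟨(hx n).1.le, (hx n).2⟩, (ne_of_gt (hx n).1)⟩
  have h1 : Tendsto (fun n => slope g 0 (x n)) atTop (nhds d) := hgd.comp htend
  have h2 : ∀ n, slope g 0 (x n) = 1 := by
    intro n
    rw [slope_def_field, hfix n, hg0]
    field_simp [(hx n).1.ne']
  rw [funext h2] at h1
  exact tendsto_nhds_unique h1 tendsto_const_nhds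
lemma iterate_mem_Ioo {F : ℝ → ℝ} (hmono : StrictMonoOn F (Ico 0 1))
    (hmaps : MapsTo F (Ico 0 1) (Ico 0 1)) (hF0 : F 0 = 0)
    {z : ℝ} (hz : z ∈ Ioo (0:ℝ) 1) (k : ℕ) : F^[k] z ∈ Ioo (0:ℝ) 1 := by
  have hzI : z ∈ Ico (0:ℝ) 1 := ⟨hz.1.le, hz.2⟩
  refine ⟨?_, (hmaps.iterate k hzI).2⟩
  have h0 : F^[k] 0 = 0 := Function.iterate_fixed hF0 k
  have := strictMonoOn_iterate hmono hmaps k (left_mem_Ico.2 (by norm_num)) hzI hz.1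
  rwa [h0] at this

lemma kopell_step {F g F' g' : ℝ → ℝ} {β V : ℝ} (hβ : β ∈ Ioo (0:ℝ) 1)
    (hF0 : F 0 = 0)
    (hFmono : StrictMonoOn F (Ico 0 1))
    (hFmaps : MapsTo F (Ico 0 1) (Ico 0 1))
    (hFlt : ∀ x ∈ Ioo (0:ℝ) 1, F x < x)
    (hFderiv : ∀ x ∈ Ioo (0:ℝ) 1, HasDerivAt F (F' x) x)
    (hF'pos : ∀ x ∈ Ioo (0:ℝ) 1, 0 < F' x)
    (hg0 : g 0 = 0)
    (hgmono : StrictMonoOn g (Ico 0 1))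
    (hgmaps : MapsTo g (Ico 0 1) (Ico 0 1))
    (hgderiv : ∀ x ∈ Ico (0:ℝ) 1, HasDerivWithinAt g (g' x) (Ico 0 1) x)
    (hg'pos : ∀ x ∈ Ico (0:ℝ) 1, 0 < g' x)
    (hg'cont0 : ContinuousWithinAt g' (Ico 0 1) 0)
    (hcomm : ∀ x ∈ Ico (0:ℝ) 1, F (g x) = g (F x))
    (hgβ : g β = β)
    (hV : ∀ (m : ℕ) (u : ℕ → ℝ), Monotone u → (∀ i, u i ∈ Ioc 0 β) →
      ∑ i ∈ Finset.range m, |Real.log (F' (u (i+1))) - Real.log (F' (u i))| ≤ V) :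
    ∀ u ∈ Icc (F β) β, g u = u := by
  have hβI : β ∈ Ico (0:ℝ) 1 := ⟨hβ.1.le, hβ.2⟩
  have hFβ : 0 < F β := by
    have := hFmono (left_mem_Ico.2 (by norm_num)) hβI hβ.1
    rwa [hF0] at this
  have hIccmem : ∀ z ∈ Icc (F β) β, z ∈ Ioo (0:ℝ) 1 :=
    fun z hz => ⟨lt_of_lt_of_le hFβ hz.1, lt_of_le_of_lt hz.2 hβ.2⟩
  have hIccico : ∀ z ∈ Icc (F β) β, z ∈ Ico (0:ℝ) 1 :=
    fun z hz => ⟨(hIccmem z hz).1.le, (hIccmem z hz).2⟩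
  have hFle : ∀ z ∈ Ico (0:ℝ) 1, F z ≤ z := by
    intro z hz
    rcases eq_or_lt_of_le hz.1 with h | h
    · rw [← h, hF0]
    · exact (hFlt z ⟨h, hz.2⟩).le
  have hgIoo : MapsTo g (Ioo 0 1) (Ioo 0 1) := by
    intro z hz
    refine ⟨?_, (hgmaps ⟨hz.1.le, hz.2⟩).2⟩
    have := hgmono (left_mem_Ico.2 (by norm_num)) ⟨hz.1.le, hz.2⟩ hz.1
    rwa [hg0] at this
  have hFIoo : MapsTo F (Ioo 0 1) (Ioo 0 1) := by
    intro z hz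
    refine ⟨?_, (hFmaps ⟨hz.1.le, hz.2⟩).2⟩
    have := hFmono (left_mem_Ico.2 (by norm_num)) ⟨hz.1.le, hz.2⟩ hz.1
    rwa [hF0] at this
  have hgcont : ContinuousOn g (Ico 0 1) := fun x hx => (hgderiv x hx).continuousWithinAt
  have hgAt : ∀ x ∈ Ioo (0:ℝ) 1, HasDerivAt g (g' x) x := fun x hx =>
    (hgderiv x ⟨hx.1.le, hx.2⟩).hasDerivAt (Ico_mem_nhds hx.1 hx.2)
  have hgiter_cont : ∀ i : ℕ, ContinuousOn (g^[i]) (Ico 0 1) := by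
    intro i
    induction i with
    | zero => simpa using continuousOn_id
    | succ i ih =>
      rw [Function.iterate_succ]
      exact ContinuousOn.comp ih hgcont hgmaps
  -- iterates of F at β are fixed points of g tending to 0
  have hcommF : ∀ m : ℕ, ∀ x ∈ Ico (0:ℝ) 1, F^[m] (g x) = g (F^[m] x) :=
    fun m => comm_iterate hFmaps hcomm m
  have hfixn : ∀ n : ℕ, g (F^[n] β) = F^[n] β := by
    intro n
    have := hcommF n β hβI
    rw [hgβ] at this
    exact this.symm
  have hβiter : ∀ n : ℕ, F^[n] β ∈ Ioo (0:ℝ) 1 :=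
    fun n => iterate_mem_Ioo hFmono hFmaps hF0 hβ n
  have hFcontAt : ∀ x ∈ Ioo (0:ℝ) 1, ContinuousAt F x :=
    fun x hx => (hFderiv x hx).continuousAt
  have htendβ : Tendsto (fun n => F^[n] β) atTop (nhds 0) :=
    tendsto_iterate_zero hF0 hFmaps hFcontAt hFlt hβI
  have hd1 : g' 0 = 1 :=
    deriv_at_zero_eq_one hg0 (hgderiv 0 (left_mem_Ico.2 (by norm_num)))
      hβiter hfixn htendβ
  -- derivative products
  set Gprod : ℕ → ℝ → ℝ := fun n x => ∏ i ∈ Finset.range n, g' (g^[i] x) with hGprod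
  set Fprod : ℕ → ℝ → ℝ := fun m x => ∏ k ∈ Finset.range m, F' (F^[k] x) with hFprod
  have hGd : ∀ n, ∀ x ∈ Ioo (0:ℝ) 1, HasDerivAt (g^[n]) (Gprod n x) x :=
    fun n x hx => hasDerivAt_iterate hgIoo hgAt n x hx
  have hFd : ∀ m, ∀ x ∈ Ioo (0:ℝ) 1, HasDerivAt (F^[m]) (Fprod m x) x :=
    fun m x hx => hasDerivAt_iterate hFIoo hFderiv m x hx
  have hGpos : ∀ n, ∀ x ∈ Ioo (0:ℝ) 1, 0 < Gprod n x := by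
    intro n x hx
    exact Finset.prod_pos fun i _ =>
      hg'pos _ (Ioo_subset_Ico_self (iterate_mem_Ioo hgmono hgmaps hg0 hx i))
  have hFpos : ∀ m, ∀ x ∈ Ioo (0:ℝ) 1, 0 < Fprod m x := by
    intro m x hx
    exact Finset.prod_pos fun k _ =>
      hF'pos _ (iterate_mem_Ioo hFmono hFmaps hF0 hx k)
  -- derivative identity from commutation
  have hcommnm : ∀ n m : ℕ, ∀ x ∈ Ico (0:ℝ) 1, g^[n] (F^[m] x) = F^[m] (g^[n] x) := by
    intro n m
    exact comm_iterate hgmaps (fun x hx => (hcommF m x hx).symm) n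
  have hident : ∀ n m : ℕ, ∀ x ∈ Ioo (0:ℝ) 1,
      Gprod n (F^[m] x) * Fprod m x = Fprod m (g^[n] x) * Gprod n x := by
    intro n m x hx
    have hFm : F^[m] x ∈ Ioo (0:ℝ) 1 := iterate_mem_Ioo hFmono hFmaps hF0 hx m
    have hgn : g^[n] x ∈ Ioo (0:ℝ) 1 := iterate_mem_Ioo hgmono hgmaps hg0 hx n
    have hA : HasDerivAt (g^[n] ∘ F^[m]) (Gprod n (F^[m] x) * Fprod m x) x :=
      (hGd n _ hFm).comp x (hFd m x hx)
    have hB : HasDerivAt (F^[m] ∘ g^[n]) (Fprod m (g^[n] x) * Gprod n x) x :=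
      (hFd m _ hgn).comp x (hGd n x hx)
    have heq : (F^[m] ∘ g^[n]) =ᶠ[nhds x] (g^[n] ∘ F^[m]) := by
      filter_upwards [Ioo_mem_nhds hx.1 hx.2] with z hz
      simp only [Function.comp_apply]
      exact (hcommnm n m z ⟨hz.1.le, hz.2⟩).symm
    exact (hA.congr_of_eventuallyEq heq).unique hB
  -- g preserves [F β, β]
  have hgFβ : g (F β) = F β := by
    have := hcomm β hβI
    rw [hgβ] at this
    exact this.symm
  have hgicc : MapsTo g (Icc (F β) β) (Icc (F β) β) := by
    intro z hz
    constructor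
    · rw [← hgFβ]
      exact hgmono.monotoneOn (hIccico _ (left_mem_Icc.2 (le_trans hz.1 hz.2))) (hIccico z hz) hz.1
    · rw [← hgβ]
      exact hgmono.monotoneOn (hIccico z hz) hβI hz.2
  -- lower bound on derivatives of iterates of g on [F β, β]
  have key : ∀ n : ℕ, ∀ x ∈ Icc (F β) β, Real.exp (-V) ≤ Gprod n x := by
    intro n x hx
    have hxIoo := hIccmem x hx
    have hgnx : g^[n] x ∈ Icc (F β) β := hgicc.iterate n hx
    -- inequality for each m
    have hineq : ∀ m : ℕ, Real.exp (-V) * Gprod n (F^[m] x) ≤ Gprod n x := by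
      intro m
      have hid := hident n m x hxIoo
      have hratio : Real.exp (-V) * Fprod m (g^[n] x) ≤ Fprod m x :=
        distortion_ratio hβ hFmono hFmaps hF0 hFle hF'pos hV hx hgnx m
      have hFm : F^[m] x ∈ Ioo (0:ℝ) 1 := iterate_mem_Ioo hFmono hFmaps hF0 hxIoo m
      have h1 : 0 < Gprod n (F^[m] x) := hGpos n _ hFm
      have h2 : 0 < Fprod m (g^[n] x) := hFpos m _ (hIccmem _ hgnx)
      have h4 : Gprod n (F^[m] x) * (Real.exp (-V) * Fprod m (g^[n] x))
          ≤ Gprod n (F^[m] x) * Fprod m x := mul_le_mul_of_nonneg_left hratio h1.le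
      rw [hid] at h4
      nlinarith [h4, h2]
    -- limit of Gprod n (F^[m] x) as m → ∞ is 1
    have htz : Tendsto (fun m => F^[m] x) atTop (nhdsWithin 0 (Ico 0 1)) := by
      apply tendsto_nhdsWithin_of_tendsto_nhds_of_eventually_within _
        (tendsto_iterate_zero hF0 hFmaps hFcontAt hFlt ⟨hxIoo.1.le, hxIoo.2⟩)
      exact Eventually.of_forall fun m => Ioo_subset_Ico_self
        (iterate_mem_Ioo hFmono hFmaps hF0 hxIoo m)
    have hlim : Tendsto (fun m => Gprod n (F^[m] x)) atTop (nhds 1) := by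
      rw [hGprod]
      have h1 : (1:ℝ) = ∏ _i ∈ Finset.range n, (1:ℝ) := by simp
      rw [h1]
      apply tendsto_finset_prod
      intro i _
      have hgi : Tendsto (fun m => g^[i] (F^[m] x)) atTop (nhdsWithin 0 (Ico 0 1)) := by
        have hc : ContinuousWithinAt (g^[i]) (Ico 0 1) 0 :=
          hgiter_cont i 0 (left_mem_Ico.2 (by norm_num))
        have h0 : g^[i] 0 = 0 := Function.iterate_fixed hg0 i
        have := (hc.tendsto_nhdsWithin (hgmaps.iterate i)).comp htz
        rwa [h0] at this
      have := hg'cont0.tendsto.comp hgi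
      rwa [hd1] at this
    have hfinal : Tendsto (fun m => Real.exp (-V) * Gprod n (F^[m] x)) atTop
        (nhds (Real.exp (-V))) := by
      have := hlim.const_mul (Real.exp (-V))
      simpa using this
    exact le_of_tendsto hfinal (Eventually.of_forall hineq)
  -- conclude g = id on [F β, β]
  intro u hu
  by_contra hne
  have hgu : g u ∈ Icc (F β) β := hgicc hu
  set a := min u (g u) with ha
  set c := max u (g u) with hc
  have hac : a < c := min_lt_max.2 (Ne.symm hne)
  have haI : a ∈ Icc (F β) β := ⟨le_min hu.1 hgu.1, min_le_of_left_le hu.2⟩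
  have hcI : c ∈ Icc (F β) β := ⟨le_max_of_le_left hu.1, max_le hu.2 hgu.2⟩
  set δ := Real.exp (-V) * (c - a) with hδ
  have hδpos : 0 < δ := mul_pos (Real.exp_pos _) (sub_pos.2 hac)
  have hstep : ∀ n : ℕ, δ ≤ g^[n] c - g^[n] a := by
    intro n
    have hcont : ContinuousOn (g^[n]) (Icc a c) := (hgiter_cont n).mono
      (fun z hz => hIccico z ⟨le_trans haI.1 hz.1, le_trans hz.2 hcI.2⟩)
    have hderiv : ∀ x ∈ Ioo a c, HasDerivAt (g^[n]) (Gprod n x) x := fun x hx =>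
      hGd n x (hIccmem x ⟨le_trans haI.1 hx.1.le, le_trans hx.2.le hcI.2⟩)
    obtain ⟨ξ, hξ, hξeq⟩ := exists_hasDerivAt_eq_slope (g^[n]) (Gprod n) hac hcont hderiv
    have hξI : ξ ∈ Icc (F β) β := ⟨le_trans haI.1 hξ.1.le, le_trans hξ.2.le hcI.2⟩
    have hk := key n ξ hξI
    rw [hξeq] at hk
    rw [hδ]
    have := (le_div_iff₀ (sub_pos.2 hac)).1 hk
    linarith
  have hgnu : ∀ n : ℕ, g^[n] u ∈ Icc (F β) β := fun n => hgicc.iterate n hu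
  rcases lt_or_gt_of_ne (Ne.symm hne) with hlt | hgt
  · have ha' : a = u := min_eq_left hlt.le
    have hc' : c = g u := max_eq_right hlt.le
    have hmono2 : ∀ N : ℕ, u + N * δ ≤ g^[N] u := by
      intro N
      induction N with
      | zero => simp
      | succ N ih =>
        have h := hstep N
        rw [ha', hc', ← Function.iterate_succ_apply] at h
        push_cast
        linarith
    obtain ⟨N, hN⟩ := exists_nat_gt ((β - u)/δ)
    have h1 := hmono2 N
    have h2 : (β - u)/δ * δ < N * δ := mul_lt_mul_of_pos_right hN hδpos
    rw [div_mul_cancel₀ _ hδpos.ne'] at h2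
    have := (hgnu N).2
    linarith
  · have ha' : a = g u := min_eq_right hgt.le
    have hc' : c = u := max_eq_left hgt.le
    have hmono2 : ∀ N : ℕ, g^[N] u ≤ u - N * δ := by
      intro N
      induction N with
      | zero => simp
      | succ N ih =>
        have h := hstep N
        rw [ha', hc', ← Function.iterate_succ_apply] at h
        push_cast
        linarith
    obtain ⟨N, hN⟩ := exists_nat_gt ((u - F β)/δ)
    have h1 := hmono2 N
    have h2 : (u - F β)/δ * δ < N * δ := mul_lt_mul_of_pos_right hN hδpos
    rw [div_mul_cancel₀ _ hδpos.ne'] at h2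
    have := (hgnu N).1
    linarith
lemma kopell_core {F g F' g' : ℝ → ℝ} {b V : ℝ} (hb : b ∈ Ioo (0:ℝ) 1)
    (hF0 : F 0 = 0)
    (hFmono : StrictMonoOn F (Ico 0 1))
    (hFmaps : MapsTo F (Ico 0 1) (Ico 0 1))
    (hFlt : ∀ x ∈ Ioo (0:ℝ) 1, F x < x)
    (hFderiv : ∀ x ∈ Ioo (0:ℝ) 1, HasDerivAt F (F' x) x)
    (hF'pos : ∀ x ∈ Ioo (0:ℝ) 1, 0 < F' x)
    (hg0 : g 0 = 0)
    (hgmono : StrictMonoOn g (Ico 0 1))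
    (hgmaps : MapsTo g (Ico 0 1) (Ico 0 1))
    (hgderiv : ∀ x ∈ Ico (0:ℝ) 1, HasDerivWithinAt g (g' x) (Ico 0 1) x)
    (hg'pos : ∀ x ∈ Ico (0:ℝ) 1, 0 < g' x)
    (hg'cont0 : ContinuousWithinAt g' (Ico 0 1) 0)
    (hcomm : ∀ x ∈ Ico (0:ℝ) 1, F (g x) = g (F x))
    (hgb : g b = b)
    (hV : ∀ (m : ℕ) (u : ℕ → ℝ), Monotone u → (∀ i, u i ∈ Ioc 0 b) →
      ∑ i ∈ Finset.range m, |Real.log (F' (u (i+1))) - Real.log (F' (u i))| ≤ V) :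
    ∀ x ∈ Ico (0:ℝ) 1, g x = x := by
  have hbI : b ∈ Ico (0:ℝ) 1 := ⟨hb.1.le, hb.2⟩
  have hFle : ∀ z ∈ Ico (0:ℝ) 1, F z ≤ z := by
    intro z hz
    rcases eq_or_lt_of_le hz.1 with h | h
    · rw [← h, hF0]
    · exact (hFlt z ⟨h, hz.2⟩).le
  have hcommF : ∀ m : ℕ, ∀ x ∈ Ico (0:ℝ) 1, F^[m] (g x) = g (F^[m] x) :=
    fun m => comm_iterate hFmaps hcomm m
  have hfixn : ∀ k : ℕ, g (F^[k] b) = F^[k] b := by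
    intro k
    have := hcommF k b hbI
    rw [hgb] at this
    exact this.symm
  have hbiter : ∀ k : ℕ, F^[k] b ∈ Ioo (0:ℝ) 1 :=
    fun k => iterate_mem_Ioo hFmono hFmaps hF0 hb k
  -- g is the identity on each fundamental domain [F^[k+1] b, F^[k] b]
  have hdom : ∀ k : ℕ, ∀ y ∈ Icc (F^[k+1] b) (F^[k] b), g y = y := by
    intro k
    have hVk : ∀ (m : ℕ) (u : ℕ → ℝ), Monotone u → (∀ i, u i ∈ Ioc 0 (F^[k] b)) →
        ∑ i ∈ Finset.range m, |Real.log (F' (u (i+1))) - Real.log (F' (u i))| ≤ V := by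
      intro m u hu hmem
      exact hV m u hu fun i => ⟨(hmem i).1,
        le_trans (hmem i).2 (iterate_le_self hFmaps hFle hbI k)⟩
    have := kopell_step (hbiter k) hF0 hFmono hFmaps hFlt hFderiv hF'pos hg0 hgmono
      hgmaps hgderiv hg'pos hg'cont0 hcomm (hfixn k) hVk
    intro y hy
    apply this
    rwa [Function.iterate_succ_apply'] at hy
  -- g is the identity on (0, b]
  have hIoc : ∀ y ∈ Ioc (0:ℝ) b, g y = y := by
    intro y hy
    have htend : Tendsto (fun k => F^[k] b) atTop (nhds 0) :=
      tendsto_iterate_zero hF0 hFmaps (fun x hx => (hFderiv x hx).continuousAt) hFlt hbI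
    have hex : ∃ k, F^[k] b < y := by
      have := (htend.eventually_lt_const hy.1)
      exact this.exists
    have hk0lt : F^[Nat.find hex] b < y := Nat.find_spec hex
    have hk0pos : Nat.find hex ≠ 0 := by
      intro h
      rw [h] at hk0lt
      simp at hk0lt
      linarith [hy.2]
    obtain ⟨k, hk⟩ := Nat.exists_eq_succ_of_ne_zero hk0pos
    rw [hk] at hk0lt
    have hnot : ¬ F^[k] b < y := Nat.find_min hex (by rw [hk]; exact Nat.lt_succ_self k)
    exact hdom k y ⟨hk0lt.le, not_lt.1 hnot⟩
  -- conclude everywhere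
  intro x hx
  rcases eq_or_lt_of_le hx.1 with h | h
  · rw [← h, hg0]
  · have hxIoo : x ∈ Ioo (0:ℝ) 1 := ⟨h, hx.2⟩
    have htend : Tendsto (fun m => F^[m] x) atTop (nhds 0) :=
      tendsto_iterate_zero hF0 hFmaps (fun z hz => (hFderiv z hz).continuousAt) hFlt hx
    have hex : ∃ m, F^[m] x < b := (htend.eventually_lt_const hb.1).exists
    obtain ⟨m, hm⟩ := hex
    have hmem : F^[m] x ∈ Ioc (0:ℝ) b := ⟨(iterate_mem_Ioo hFmono hFmaps hF0 hxIoo m).1, hm.le⟩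
    have h1 : g (F^[m] x) = F^[m] x := hIoc _ hmem
    have h2 : F^[m] (g x) = F^[m] x := by rw [hcommF m x hx, h1]
    exact (strictMonoOn_iterate hFmono hFmaps m).injOn (hgmaps hx) hx h2
/-- Kopell's Lemma: if `f` and `g` are commuting diffeomorphisms of `[0,1)`, `f` of class
`C^{1+bv}` and `g` of class `C^1`, `f` has no fixed point in `(0,1)` and `g` has one, then
`g` is the identity. -/
theorem stmt_1 (f g f' g' : ℝ → ℝ)
    (hf0 : f 0 = 0) (hg0 : g 0 = 0)
    (hfimg : f '' Ico 0 1 = Ico 0 1) (hgimg : g '' Ico 0 1 = Ico 0 1)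
    (hfmono : StrictMonoOn f (Ico 0 1)) (hgmono : StrictMonoOn g (Ico 0 1))
    (hfderiv : ∀ x ∈ Ico (0:ℝ) 1, HasDerivWithinAt f (f' x) (Ico 0 1) x)
    (hgderiv : ∀ x ∈ Ico (0:ℝ) 1, HasDerivWithinAt g (g' x) (Ico 0 1) x)
    (hf'pos : ∀ x ∈ Ico (0:ℝ) 1, 0 < f' x)
    (hg'pos : ∀ x ∈ Ico (0:ℝ) 1, 0 < g' x)
    (hf'cont : ContinuousOn f' (Ico 0 1))
    (hg'cont : ContinuousOn g' (Ico 0 1))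
    (hbv : ∀ c ∈ Ico (0:ℝ) 1, BoundedVariationOn (fun x => Real.log (f' x)) (Icc 0 c))
    (hcomm : ∀ x ∈ Ico (0:ℝ) 1, f (g x) = g (f x))
    (hffix : ∀ x ∈ Ioo (0:ℝ) 1, f x ≠ x)
    (hgfix : ∃ x ∈ Ioo (0:ℝ) 1, g x = x) :
    ∀ x ∈ Ico (0:ℝ) 1, g x = x := by
  obtain ⟨b, hb, hgb⟩ := hgfix
  have hbI : b ∈ Ico (0:ℝ) 1 := ⟨hb.1.le, hb.2⟩
  have h0I : (0:ℝ) ∈ Ico (0:ℝ) 1 := left_mem_Ico.2 (by norm_num)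
  have hfmaps : MapsTo f (Ico 0 1) (Ico 0 1) := by
    intro x hx
    rw [← hfimg]
    exact mem_image_of_mem f hx
  have hgmaps : MapsTo g (Ico 0 1) (Ico 0 1) := by
    intro x hx
    rw [← hgimg]
    exact mem_image_of_mem g hx
  have hg'cont0 : ContinuousWithinAt g' (Ico 0 1) 0 := hg'cont 0 h0I
  have hfcont : ContinuousOn f (Ico 0 1) := fun x hx => (hfderiv x hx).continuousWithinAt
  -- sign dichotomy for f
  have hdichot : (∀ x ∈ Ioo (0:ℝ) 1, f x < x) ∨ (∀ x ∈ Ioo (0:ℝ) 1, x < f x) := by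
    by_cases hcase : ∀ x ∈ Ioo (0:ℝ) 1, f x < x
    · exact Or.inl hcase
    · right
      push_neg at hcase
      obtain ⟨x0, hx0, hx0le⟩ := hcase
      have hx0lt : x0 < f x0 := lt_of_le_of_ne hx0le (Ne.symm (hffix x0 hx0))
      intro y hy
      rcases lt_or_ge y (f y) with h | h
      · exact h
      have hylt : f y < y := lt_of_le_of_ne h (hffix y hy)
      exfalso
      rcases le_total y x0 with hyx | hyx
      · -- f y - y < 0 ≤ f x0 - x0 on [y, x0]
        have hsub : Icc y x0 ⊆ Ico (0:ℝ) 1 := fun z hz => ⟨le_trans hy.1.le hz.1,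
          lt_of_le_of_lt hz.2 hx0.2⟩
        have hc : ContinuousOn (fun z => f z - z) (Icc y x0) :=
          (hfcont.mono hsub).sub continuousOn_id
        have hiv := intermediate_value_Icc hyx hc
        have h0mem : (0:ℝ) ∈ Icc (f y - y) (f x0 - x0) := ⟨by linarith, by linarith⟩
        obtain ⟨z, hz, hz0⟩ := hiv h0mem
        have hzIoo : z ∈ Ioo (0:ℝ) 1 := ⟨lt_of_lt_of_le hy.1 hz.1, lt_of_le_of_lt hz.2 hx0.2⟩
        exact hffix z hzIoo (by linarith [sub_eq_zero.1 hz0])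
      · have hsub : Icc x0 y ⊆ Ico (0:ℝ) 1 := fun z hz => ⟨le_trans hx0.1.le hz.1,
          lt_of_le_of_lt hz.2 hy.2⟩
        have hc : ContinuousOn (fun z => f z - z) (Icc x0 y) :=
          (hfcont.mono hsub).sub continuousOn_id
        have hiv := intermediate_value_Icc' hyx hc
        have h0mem : (0:ℝ) ∈ Icc (f y - y) (f x0 - x0) := ⟨by linarith, by linarith⟩
        obtain ⟨z, hz, hz0⟩ := hiv h0mem
        have hzIoo : z ∈ Ioo (0:ℝ) 1 := ⟨lt_of_lt_of_le hx0.1 hz.1, lt_of_le_of_lt hz.2 hy.2⟩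
        exact hffix z hzIoo (by linarith [sub_eq_zero.1 hz0])
  obtain ⟨V, hVf⟩ := bv_sum_bound (hbv b hbI)
  rcases hdichot with hlt | hgt
  · -- f has no fixed point and f < id : apply the core directly
    refine kopell_core (V := V) hb hf0 hfmono hfmaps hlt
      (fun x hx => (hfderiv x ⟨hx.1.le, hx.2⟩).hasDerivAt (Ico_mem_nhds hx.1 hx.2))
      (fun x hx => hf'pos x ⟨hx.1.le, hx.2⟩) hg0 hgmono hgmaps hgderiv hg'pos
      hg'cont0 hcomm hgb ?_
    intro m u hu humem
    exact hVf m u hu fun i => Ioc_subset_Icc_self (humem i)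
  · -- f > id : apply the core to the inverse of f
    set F : ℝ → ℝ := Function.invFunOn f (Ico 0 1) with hF
    have hsurj : ∀ y ∈ Ico (0:ℝ) 1, ∃ a ∈ Ico (0:ℝ) 1, f a = y := by
      intro y hy
      rw [← hfimg] at hy
      obtain ⟨a, ha, hay⟩ := hy
      exact ⟨a, ha, hay⟩
    have hfr : ∀ y ∈ Ico (0:ℝ) 1, f (F y) = y := fun y hy =>
      Function.invFunOn_eq (hsurj y hy)
    have hFmaps : MapsTo F (Ico 0 1) (Ico 0 1) := fun y hy =>
      Function.invFunOn_mem (hsurj y hy)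
    have hfl : ∀ x ∈ Ico (0:ℝ) 1, F (f x) = x := by
      intro x hx
      exact hfmono.injOn (hFmaps (hfmaps hx)) hx (hfr (f x) (hfmaps hx))
    have hF0 : F 0 = 0 := by
      have := hfl 0 h0I
      rwa [hf0] at this
    have hFmono : StrictMonoOn F (Ico 0 1) := by
      intro y1 h1 y2 h2 h12
      by_contra hcon
      push_neg at hcon
      have := hfmono.monotoneOn (hFmaps h2) (hFmaps h1) hcon
      rw [hfr y1 h1, hfr y2 h2] at this
      exact absurd h12 (not_lt.2 this)
    have hFlt : ∀ x ∈ Ioo (0:ℝ) 1, F x < x := by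
      intro x hx
      have hxI : x ∈ Ico (0:ℝ) 1 := ⟨hx.1.le, hx.2⟩
      have hFx : F x ∈ Ico (0:ℝ) 1 := hFmaps hxI
      have hFxne : F x ≠ 0 := by
        intro h
        rw [← hfr x hxI, h, hf0] at hx
        exact lt_irrefl 0 hx.1
      have hFxIoo : F x ∈ Ioo (0:ℝ) 1 := ⟨lt_of_le_of_ne hFx.1 (Ne.symm hFxne), hFx.2⟩
      have := hgt (F x) hFxIoo
      rwa [hfr x hxI] at this
    have hFcontAt : ∀ y ∈ Ioo (0:ℝ) 1, ContinuousAt F y := by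
      intro y hy
      apply hFmono.continuousAt_of_image_mem_nhds (Ico_mem_nhds hy.1 hy.2)
      apply mem_of_superset (Ico_mem_nhds ?_ ?_)
      · intro x hx
        exact ⟨f x, hfmaps hx, hfl x hx⟩
      · have hFy := hFmaps ⟨hy.1.le, hy.2⟩
        have hne : F y ≠ 0 := by
          intro h
          rw [← hfr y ⟨hy.1.le, hy.2⟩, h, hf0] at hy
          exact lt_irrefl 0 hy.1
        exact lt_of_le_of_ne hFy.1 (Ne.symm hne)
      · exact (hFmaps ⟨hy.1.le, hy.2⟩).2
    set F' : ℝ → ℝ := fun y => (f' (F y))⁻¹ with hF'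
    have hFIoo : ∀ y ∈ Ioo (0:ℝ) 1, F y ∈ Ioo (0:ℝ) 1 := by
      intro y hy
      have hFy := hFmaps ⟨hy.1.le, hy.2⟩
      have hne : F y ≠ 0 := by
        intro h
        rw [← hfr y ⟨hy.1.le, hy.2⟩, h, hf0] at hy
        exact lt_irrefl 0 hy.1
      exact ⟨lt_of_le_of_ne hFy.1 (Ne.symm hne), hFy.2⟩
    have hFderiv : ∀ y ∈ Ioo (0:ℝ) 1, HasDerivAt F (F' y) y := by
      intro y hy
      have hFy := hFIoo y hy
      apply HasDerivAt.of_local_left_inverse (hFcontAt y hy)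
        ((hfderiv (F y) ⟨hFy.1.le, hFy.2⟩).hasDerivAt (Ico_mem_nhds hFy.1 hFy.2))
        (hf'pos (F y) ⟨hFy.1.le, hFy.2⟩).ne'
      filter_upwards [Ioo_mem_nhds hy.1 hy.2] with z hz
      exact hfr z ⟨hz.1.le, hz.2⟩
    have hF'pos : ∀ y ∈ Ioo (0:ℝ) 1, 0 < F' y := by
      intro y hy
      have hFy := hFIoo y hy
      exact inv_pos.2 (hf'pos (F y) ⟨hFy.1.le, hFy.2⟩)
    have hcommF : ∀ x ∈ Ico (0:ℝ) 1, F (g x) = g (F x) := by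
      intro x hx
      have h1 : f (F (g x)) = g x := hfr (g x) (hgmaps hx)
      have h2 : f (g (F x)) = g x := by
        rw [hcomm (F x) (hFmaps hx), hfr x hx]
      exact hfmono.injOn (hFmaps (hgmaps hx)) (hgmaps (hFmaps hx)) (h1.trans h2.symm)
    refine kopell_core (V := V) hb hF0 hFmono hFmaps hFlt hFderiv hF'pos hg0 hgmono hgmaps
      hgderiv hg'pos hg'cont0 hcommF hgb ?_
    intro m u hu humem
    have hwmem : ∀ i, F (u i) ∈ Icc (0:ℝ) b := by
      intro i
      have hui : u i ∈ Ico (0:ℝ) 1 := ⟨(humem i).1.le,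
        lt_of_le_of_lt (humem i).2 hb.2⟩
      refine ⟨(hFmaps hui).1, ?_⟩
      calc F (u i) ≤ u i := (hFlt (u i) ⟨(humem i).1, hui.2⟩).le
        _ ≤ b := (humem i).2
    have hwmono : Monotone fun i => F (u i) := by
      intro i j hij
      exact hFmono.monotoneOn ⟨(humem i).1.le, lt_of_le_of_lt (humem i).2 hb.2⟩
        ⟨(humem j).1.le, lt_of_le_of_lt (humem j).2 hb.2⟩ (hu hij)
    have := hVf m (fun i => F (u i)) hwmono hwmem
    have heq : ∀ i : ℕ, |Real.log (F' (u (i+1))) - Real.log (F' (u i))|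
        = |Real.log (f' (F (u (i+1)))) - Real.log (f' (F (u i)))| := by
      intro i
      rw [hF']
      simp only [Real.log_inv]
      rw [abs_sub_comm]
      ring_nf
    calc ∑ i ∈ Finset.range m, |Real.log (F' (u (i+1))) - Real.log (F' (u i))|
        = ∑ i ∈ Finset.range m, |Real.log (f' (F (u (i+1)))) - Real.log (f' (F (u i)))| :=
          Finset.sum_congr rfl fun i _ => heq i
      _ ≤ V := this
end

section
/- Let g : [a,b] → [a,b] be a C^1 diffeomorphism fixing a and b, and suppose there exists M < ∞ such that (gʲ)'(x) ≤ exp(M) for all x ∈ [a,b] and all j ∈ ℕ. Then g is the identity on [a,b]. -/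
open Set

private lemma myIterDeriv (a b : ℝ) (g g' : ℝ → ℝ)
    (hmaps : MapsTo g (Icc a b) (Icc a b))
    (hderiv : ∀ x ∈ Icc a b, HasDerivWithinAt g (g' x) (Icc a b) x) :
    ∀ j : ℕ, ∀ x ∈ Icc a b,
      HasDerivWithinAt (g^[j]) (∏ i ∈ Finset.range j, g' (g^[i] x)) (Icc a b) x := by
  intro j
  induction j with
  | zero => intro x hx; simpa using hasDerivWithinAt_id x (Icc a b)
  | succ n ih =>
    intro x hx
    have h1 := ih x hx
    have h2 := hderiv (g^[n] x) (hmaps.iterate n hx)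
    have h3 := h2.comp x h1 (hmaps.iterate n)
    rw [Finset.prod_range_succ, Function.iterate_succ']
    simpa [Function.comp, mul_comm] using h3

private lemma myLip (a b M : ℝ) (g g' : ℝ → ℝ)
    (hmaps : MapsTo g (Icc a b) (Icc a b))
    (hderiv : ∀ x ∈ Icc a b, HasDerivWithinAt g (g' x) (Icc a b) x)
    (hnn : ∀ x ∈ Icc a b, 0 ≤ g' x)
    (hbound : ∀ j : ℕ, ∀ x ∈ Icc a b,
      (∏ i ∈ Finset.range j, g' (g^[i] x)) ≤ Real.exp M) :
    ∀ j : ℕ, ∀ x ∈ Icc a b, ∀ y ∈ Icc a b,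
      |g^[j] y - g^[j] x| ≤ Real.exp M * |y - x| := by
  intro j x hx y hy
  have key := Convex.norm_image_sub_le_of_norm_hasDerivWithin_le
    (f := g^[j]) (f' := fun z => ∏ i ∈ Finset.range j, g' (g^[i] z)) (C := Real.exp M)
    (fun z hz => myIterDeriv a b g g' hmaps hderiv j z hz)
    (fun z hz => by
      rw [Real.norm_eq_abs,
        abs_of_nonneg (Finset.prod_nonneg fun i _ => hnn _ (hmaps.iterate i hz))]
      exact hbound j z hz)
    (convex_Icc a b) hx hy
  simpa [Real.norm_eq_abs] using key

private lemma myAux (a b M : ℝ) (g g' : ℝ → ℝ) (hga : g a = a)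
    (hmaps : MapsTo g (Icc a b) (Icc a b))
    (hderiv : ∀ x ∈ Icc a b, HasDerivWithinAt g (g' x) (Icc a b) x)
    (hnn : ∀ x ∈ Icc a b, 0 ≤ g' x)
    (hbound : ∀ j : ℕ, ∀ x ∈ Icc a b,
      (∏ i ∈ Finset.range j, g' (g^[i] x)) ≤ Real.exp M) :
    ∀ x ∈ Icc a b, g x ≤ x := by
  intro x₀ hx₀
  by_contra hgx₀'
  push_neg at hgx₀'
  have hab : a ≤ b := hx₀.1.trans hx₀.2
  have haI : a ∈ Icc a b := ⟨le_refl a, hab⟩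
  have hgcont : ContinuousOn g (Icc a b) := fun z hz => (hderiv z hz).continuousWithinAt
  have hexp1 : (1:ℝ) ≤ Real.exp M := by simpa using hbound 0 a haI
  have hexp0 : (0:ℝ) < Real.exp M := Real.exp_pos M
  set S : Set ℝ := {z | z ∈ Icc a x₀ ∧ g z = z} with hSdef
  have hSne : S.Nonempty := ⟨a, ⟨le_refl a, hx₀.1⟩, hga⟩
  have hSbdd : BddAbove S := ⟨x₀, fun z hz => hz.1.2⟩
  have hIsub : Icc a x₀ ⊆ Icc a b := Icc_subset_Icc le_rfl hx₀.2
  have hScl : IsClosed S := by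
    have hSeq : S = Icc a x₀ ∩ (fun z => g z - z) ⁻¹' {0} := by
      ext z
      simp only [hSdef, mem_setOf_eq, mem_inter_iff, mem_preimage, mem_singleton_iff,
        sub_eq_zero]
    rw [hSeq]
    exact ContinuousOn.preimage_isClosed_of_isClosed
      ((hgcont.mono hIsub).sub continuousOn_id) isClosed_Icc isClosed_singleton
  set d := sSup S with hd
  have hdS : d ∈ S := hScl.csSup_mem hSne hSbdd
  have hgd : g d = d := hdS.2
  have hdx₀ : d < x₀ := hdS.1.2.lt_of_ne (fun hdeq => by
    rw [hdeq] at hgd; linarith)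
  have hdI : d ∈ Icc a b := hIsub hdS.1
  have claim1 : ∀ z, d < z → z < x₀ → z < g z := by
    intro z hz1 hz2
    have hzI : z ∈ Icc a b := ⟨hdI.1.trans hz1.le, hz2.le.trans hx₀.2⟩
    rcases lt_trichotomy (g z) z with h | h | h
    · have hsub : Icc z x₀ ⊆ Icc a b := Icc_subset_Icc hzI.1 hx₀.2
      have hcont2 : ContinuousOn (fun t => g t - t) (Icc z x₀) :=
        (hgcont.mono hsub).sub continuousOn_id
      have h0 : (0:ℝ) ∈ Ioo (g z - z) (g x₀ - x₀) := ⟨sub_neg.2 h, sub_pos.2 hgx₀'⟩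
      obtain ⟨c, hc, hc0⟩ := intermediate_value_Ioo hz2.le hcont2 h0
      have hcS : c ∈ S := ⟨⟨hzI.1.trans hc.1.le, hc.2.le⟩, by
        have : g c - c = 0 := hc0; linarith⟩
      exact absurd (le_csSup hSbdd hcS) (not_le.2 (hz1.trans hc.1))
    · exact absurd (le_csSup hSbdd ⟨⟨hzI.1, hz2.le⟩, h⟩) (not_le.2 hz1)
    · exact h
  have claim2 : ∀ y, d < y → y < x₀ → ∃ j, x₀ ≤ g^[j] y := by
    intro y hy1 hy2
    by_contra hno
    push_neg at hno
    have hyI : y ∈ Icc a b := ⟨hdI.1.trans hy1.le, hy2.le.trans hx₀.2⟩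
    set u : ℕ → ℝ := fun j => g^[j] y with hu
    have hmem : ∀ j, u j ∈ Icc a b := fun j => hmaps.iterate j hyI
    have hdu : ∀ j, d < u j := by
      intro j
      induction j with
      | zero => simpa [hu] using hy1
      | succ n ih =>
        have h1 : u n < g (u n) := claim1 (u n) ih (hno n)
        have h2 : u (n+1) = g (u n) := Function.iterate_succ_apply' g n y
        rw [h2]; exact ih.trans h1
    have hmono' : Monotone u := monotone_nat_of_le_succ (fun n => by
      rw [show u (n+1) = g (u n) from Function.iterate_succ_apply' g n y]
      exact (claim1 (u n) (hdu n) (hno n)).le)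
    have hbdd : BddAbove (Set.range u) := ⟨x₀, by rintro _ ⟨j, rfl⟩; exact (hno j).le⟩
    set c := ⨆ j, u j with hc
    have htend : Filter.Tendsto u Filter.atTop (nhds c) := tendsto_atTop_ciSup hmono' hbdd
    have hyc : y ≤ c := le_ciSup hbdd 0
    have hcx₀ : c ≤ x₀ := ciSup_le fun j => (hno j).le
    have hcI : c ∈ Icc a b := ⟨hyI.1.trans hyc, hcx₀.trans hx₀.2⟩
    have hgc' : g c = c := by
      have h1 : Filter.Tendsto (fun j => g (u j)) Filter.atTop (nhds (g c)) := by
        apply (hgcont c hcI).tendsto.comp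
        rw [tendsto_nhdsWithin_iff]
        exact ⟨htend, Filter.Eventually.of_forall hmem⟩
      have h2 : Filter.Tendsto (fun j => u (j+1)) Filter.atTop (nhds c) :=
        htend.comp (Filter.tendsto_add_atTop_nat 1)
      have heq : (fun j => g (u j)) = fun j => u (j+1) := by
        funext j; exact (Function.iterate_succ_apply' g j y).symm
      rw [heq] at h1
      exact tendsto_nhds_unique h1 h2
    have hcS : c ∈ S := ⟨⟨hcI.1, hcx₀⟩, hgc'⟩
    exact absurd (le_csSup hSbdd hcS) (not_le.2 ((hdu 0).trans_le hyc))
  set y := d + (x₀ - d) / (2 * Real.exp M) with hy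
  have h1 : d < y := by
    have : 0 < (x₀ - d) / (2 * Real.exp M) := div_pos (by linarith) (by linarith)
    simp only [hy]; linarith
  have hhalf : (x₀ - d) / (2 * Real.exp M) ≤ (x₀ - d) / 2 := by
    gcongr
    · linarith
  have h2 : y < x₀ := by simp only [hy]; linarith
  obtain ⟨j, hj⟩ := claim2 y h1 h2
  have hyI : y ∈ Icc a b := ⟨hdI.1.trans h1.le, h2.le.trans hx₀.2⟩
  have hlip := myLip a b M g g' hmaps hderiv hnn hbound j d hdI y hyI
  rw [Function.iterate_fixed hgd j] at hlip
  have habs1 : g^[j] y - d ≤ Real.exp M * (y - d) :=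
    calc g^[j] y - d ≤ |g^[j] y - d| := le_abs_self _
      _ ≤ Real.exp M * |y - d| := hlip
      _ = Real.exp M * (y - d) := by rw [abs_of_pos (by linarith : (0:ℝ) < y - d)]
  have heq : Real.exp M * (y - d) = (x₀ - d) / 2 := by
    have : y - d = (x₀ - d) / (2 * Real.exp M) := by simp [hy]
    rw [this]
    field_simp
  have : x₀ - d ≤ (x₀ - d) / 2 := by
    calc x₀ - d ≤ g^[j] y - d := by linarith
      _ ≤ Real.exp M * (y - d) := habs1
      _ = (x₀ - d) / 2 := heq
  linarith

/-- A `C^1` diffeomorphism of `[a,b]` fixing the endpoints, all of whose iterates have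
derivative bounded by `exp M`, is the identity. Here `(gʲ)'(x) = ∏_{i<j} g'(g^[i] x)`. -/
theorem stmt_3 (a b M : ℝ) (hab : a < b) (g g' : ℝ → ℝ)
    (hga : g a = a) (hgb : g b = b)
    (hmono : StrictMonoOn g (Icc a b))
    (hmaps : MapsTo g (Icc a b) (Icc a b))
    (hderiv : ∀ x ∈ Icc a b, HasDerivWithinAt g (g' x) (Icc a b) x)
    (hcont : ContinuousOn g' (Icc a b))
    (hpos : ∀ x ∈ Icc a b, 0 < g' x)
    (hbound : ∀ j : ℕ, ∀ x ∈ Icc a b,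
      (∏ i ∈ Finset.range j, g' (g^[i] x)) ≤ Real.exp M) :
    ∀ x ∈ Icc a b, g x = x := by
  have hle : ∀ x ∈ Icc a b, g x ≤ x :=
    myAux a b M g g' hga hmaps hderiv (fun x hx => (hpos x hx).le) hbound
  -- reflected system on [-b, -a]
  set h : ℝ → ℝ := fun z => -g (-z) with hhdef
  set h' : ℝ → ℝ := fun z => g' (-z) with hh'def
  have hnegmem : ∀ z ∈ Icc (-b) (-a), -z ∈ Icc a b := by
    intro z hz
    exact ⟨by linarith [hz.2], by linarith [hz.1]⟩
  have hnegmap : MapsTo (fun z : ℝ => -z) (Icc (-b) (-a)) (Icc a b) := hnegmem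
  have hhmaps : MapsTo h (Icc (-b) (-a)) (Icc (-b) (-a)) := by
    intro z hz
    have := hmaps (hnegmem z hz)
    exact ⟨by simp only [hhdef]; linarith [this.2], by simp only [hhdef]; linarith [this.1]⟩
  have hha : h (-b) = -b := by simp [hhdef, hgb]
  have hhderiv : ∀ z ∈ Icc (-b) (-a), HasDerivWithinAt h (h' z) (Icc (-b) (-a)) z := by
    intro z hz
    have hneg : HasDerivWithinAt (fun w : ℝ => -w) (-1) (Icc (-b) (-a)) z :=
      (hasDerivWithinAt_id z _).neg
    have hc := (hderiv (-z) (hnegmem z hz)).comp z hneg hnegmap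
    have := hc.neg
    rw [show h' z = -(g' (-z) * -1) by simp [hh'def]]; exact this
  have hit : ∀ (i : ℕ) (z : ℝ), h^[i] z = -(g^[i] (-z)) := by
    intro i
    induction i with
    | zero => intro z; simp
    | succ n ih =>
      intro z
      rw [Function.iterate_succ_apply', Function.iterate_succ_apply', ih z]
      simp [hhdef]
  have hhbound : ∀ j : ℕ, ∀ z ∈ Icc (-b) (-a),
      (∏ i ∈ Finset.range j, h' (h^[i] z)) ≤ Real.exp M := by
    intro j z hz
    have : ∀ i, h' (h^[i] z) = g' (g^[i] (-z)) := by
      intro i; rw [hit i z]; simp [hh'def]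
    calc (∏ i ∈ Finset.range j, h' (h^[i] z))
        = ∏ i ∈ Finset.range j, g' (g^[i] (-z)) := Finset.prod_congr rfl (fun i _ => this i)
      _ ≤ Real.exp M := hbound j (-z) (hnegmem z hz)
  have hge := myAux (-b) (-a) M h h' hha hhmaps hhderiv
    (fun z hz => (hpos (-z) (hnegmem z hz)).le) hhbound
  intro x hx
  have hx' : -x ∈ Icc (-b) (-a) := ⟨by linarith [hx.2], by linarith [hx.1]⟩
  have := hge (-x) hx'
  simp only [hhdef, neg_neg] at this
  have : x ≤ g x := by linarith
  exact le_antisymm (hle x hx) this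
end

section
/- Let (ℓ_{m,n})_{m,n≥0} be nonnegative reals with Σ_{m,n} ℓ_{m,n} ≤ S < ∞, and let 1/2 < τ < 1. Then Σ_{k≥0} (1/(k+1)) Σ_{m+n=k} ℓ_{m,n}^τ ≤ S^τ · (Σ_{k≥1} k^{-τ/(1-τ)})^{1-τ}, and in particular this double sum is finite. -/
open MeasureTheory ENNReal

private lemma tsum_antidiag_aux (H : ℕ × ℕ → ℝ≥0∞) :
    ∑' p : ℕ × ℕ, H p = ∑' k : ℕ, ∑ m ∈ Finset.range (k+1), H (m, k - m) := by
  rw [← Finset.HasAntidiagonal.sigmaAntidiagonalEquivProd.tsum_eq H, ENNReal.tsum_sigma']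
  refine tsum_congr fun k => ?_
  exact (Finset.tsum_subtype (Finset.HasAntidiagonal.antidiagonal k) H).trans
    (Finset.Nat.sum_antidiagonal_eq_sum_range_succ_mk H k)

/-- Key Hölder estimate of the generalized Denjoy theorem: for nonnegative `ℓ_{m,n}` with
`Σ ℓ_{m,n} ≤ S` and `1/2 < τ < 1`,
`Σ_k (1/(k+1)) Σ_{m+n=k} ℓ_{m,n}^τ ≤ S^τ (Σ_{k≥1} k^{-τ/(1-τ)})^{1-τ} < ∞`. -/
theorem stmt_7 (ℓ : ℕ → ℕ → ℝ) (S τ : ℝ)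
    (hpos : ∀ m n, 0 ≤ ℓ m n)
    (hτ : 1/2 < τ) (hτ1 : τ < 1)
    (hsum : ∑' p : ℕ × ℕ, ENNReal.ofReal (ℓ p.1 p.2) ≤ ENNReal.ofReal S) :
    (∑' k : ℕ, ENNReal.ofReal
        ((1 / ((k:ℝ) + 1)) * ∑ m ∈ Finset.range (k+1), ℓ m (k - m) ^ τ))
      ≤ ENNReal.ofReal (S ^ τ) *
        (∑' k : ℕ, ENNReal.ofReal (((k:ℝ) + 1) ^ (-(τ / (1 - τ))))) ^ (1 - τ) ∧
    (∑' k : ℕ, ENNReal.ofReal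
        ((1 / ((k:ℝ) + 1)) * ∑ m ∈ Finset.range (k+1), ℓ m (k - m) ^ τ)) ≠ ⊤ := by
  have h0τ : 0 < τ := by linarith
  have h1τ : 0 < 1 - τ := by linarith
  -- the weight function
  set F : ℕ × ℕ → ℝ≥0∞ := fun p => ENNReal.ofReal (ℓ p.1 p.2) with hF
  set G : ℕ × ℕ → ℝ≥0∞ := fun p => ENNReal.ofReal ((((p.1 + p.2 : ℕ):ℝ) + 1)⁻¹) with hG
  have hq : (1:ℝ) - 1/(1-τ) = -(τ/(1-τ)) := by field_simp; ring
  -- Step A : rewrite the LHS as a sum over pairs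
  have hLHS : (∑' k : ℕ, ENNReal.ofReal
        ((1 / ((k:ℝ) + 1)) * ∑ m ∈ Finset.range (k+1), ℓ m (k - m) ^ τ))
      = ∑' p : ℕ × ℕ, (F p ^ τ) * G p := by
    rw [tsum_antidiag_aux fun p => (F p ^ τ) * G p]
    refine tsum_congr fun k => ?_
    rw [Finset.mul_sum, ENNReal.ofReal_sum_of_nonneg
      (fun m _ => mul_nonneg (by positivity) (Real.rpow_nonneg (hpos _ _) _))]
    refine Finset.sum_congr rfl fun m hm => ?_
    have hmk : m + (k - m) = k := Nat.add_sub_cancel' (Nat.lt_succ_iff.mp (Finset.mem_range.mp hm))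
    simp only [hF, hG, hmk]
    rw [mul_comm, ENNReal.ofReal_mul (Real.rpow_nonneg (hpos _ _) _),
      ← ENNReal.ofReal_rpow_of_nonneg (hpos _ _) h0τ.le, one_div]
  -- Step B : Hölder's inequality for the counting measure on ℕ × ℕ
  have hpq : ((1:ℝ)/τ).HolderConjugate (1/(1-τ)) := by
    rw [Real.holderConjugate_iff]
    constructor
    · rw [lt_div_iff₀ h0τ]; linarith
    · rw [one_div, one_div, inv_inv, inv_inv]; ring
  have hold := ENNReal.lintegral_mul_le_Lp_mul_Lq (Measure.count : Measure (ℕ × ℕ)) hpq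
      (f := fun p => F p ^ τ) (g := G)
      (measurable_of_countable _).aemeasurable (measurable_of_countable _).aemeasurable
  rw [lintegral_count, lintegral_count, lintegral_count] at hold
  have hfp : ∀ p : ℕ × ℕ, (F p ^ τ) ^ ((1:ℝ)/τ) = F p := fun p => by
    rw [← ENNReal.rpow_mul, mul_one_div, div_self h0τ.ne', ENNReal.rpow_one]
  simp only [Pi.mul_apply, hfp, one_div_one_div] at hold
  -- identify the second factor
  have hGsum : (∑' p : ℕ × ℕ, G p ^ ((1:ℝ)/(1-τ)))
      = ∑' k : ℕ, ENNReal.ofReal (((k:ℝ) + 1) ^ (-(τ / (1 - τ)))) := by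
    have h1 : ∀ p : ℕ × ℕ, G p ^ ((1:ℝ)/(1-τ))
        = ENNReal.ofReal ((((p.1 + p.2 : ℕ):ℝ) + 1) ^ (-((1:ℝ)/(1-τ)))) := by
      intro p
      have hx : (0:ℝ) < ((p.1 + p.2 : ℕ):ℝ) + 1 := by positivity
      rw [hG, ENNReal.ofReal_rpow_of_pos (inv_pos.mpr hx)]
      congr 1
      rw [Real.inv_rpow hx.le, ← Real.rpow_neg hx.le]
    simp only [h1]
    rw [tsum_antidiag_aux fun p => ENNReal.ofReal ((((p.1 + p.2 : ℕ):ℝ) + 1) ^ (-((1:ℝ)/(1-τ))))]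
    refine tsum_congr fun k => ?_
    have hsum' : ∀ m ∈ Finset.range (k+1),
        ENNReal.ofReal ((((m + (k - m) : ℕ):ℝ) + 1) ^ (-((1:ℝ)/(1-τ))))
        = ENNReal.ofReal (((k:ℝ) + 1) ^ (-((1:ℝ)/(1-τ)))) := fun m hm => by
      rw [Nat.add_sub_cancel' (Nat.lt_succ_iff.mp (Finset.mem_range.mp hm))]
    rw [Finset.sum_congr rfl hsum', Finset.sum_const, Finset.card_range, nsmul_eq_mul]
    have hk : (0:ℝ) < (k:ℝ) + 1 := by positivity
    rw [show ((k+1 : ℕ) : ℝ≥0∞) = ENNReal.ofReal ((k:ℝ)+1) by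
        rw [← ENNReal.ofReal_natCast (k+1)]; norm_num,
      ← ENNReal.ofReal_mul hk.le]
    congr 1
    nth_rewrite 1 [← Real.rpow_one ((k:ℝ)+1)]
    rw [← Real.rpow_add hk,
      show (1:ℝ) + -(1/(1-τ)) = -(τ/(1-τ)) by rw [← hq]; ring]
  rw [hGsum] at hold
  -- the first factor
  rcases le_or_gt 0 S with hS | hS
  · have hFle : (∑' p : ℕ × ℕ, F p) ^ τ ≤ ENNReal.ofReal (S ^ τ) := by
      rw [← ENNReal.ofReal_rpow_of_nonneg hS h0τ.le]
      exact ENNReal.rpow_le_rpow hsum h0τ.le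
    have hmain : (∑' k : ℕ, ENNReal.ofReal
          ((1 / ((k:ℝ) + 1)) * ∑ m ∈ Finset.range (k+1), ℓ m (k - m) ^ τ))
        ≤ ENNReal.ofReal (S ^ τ) *
          (∑' k : ℕ, ENNReal.ofReal (((k:ℝ) + 1) ^ (-(τ / (1 - τ))))) ^ (1 - τ) := by
      rw [hLHS]
      calc ∑' p : ℕ × ℕ, (F p ^ τ) * G p
          ≤ (∑' p : ℕ × ℕ, F p) ^ τ *
            (∑' k : ℕ, ENNReal.ofReal (((k:ℝ) + 1) ^ (-(τ / (1 - τ))))) ^ (1 - τ) := hold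
        _ ≤ _ := mul_le_mul_left hFle _
    refine ⟨hmain, ne_top_of_le_ne_top ?_ hmain⟩
    refine ENNReal.mul_ne_top ENNReal.ofReal_ne_top
      (ENNReal.rpow_ne_top_of_nonneg h1τ.le ?_)
    -- summability of the p-series
    have hr : (1:ℝ) < τ/(1-τ) := by
      rw [lt_div_iff₀ h1τ]; linarith
    have hsummable : Summable (fun k : ℕ => ((k:ℝ) + 1) ^ (-(τ / (1 - τ)))) := by
      have := Real.summable_nat_rpow (p := -(τ/(1-τ))) |>.mpr (by linarith)
      have h2 := (summable_nat_add_iff 1).mpr this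
      refine h2.congr fun k => ?_
      push_cast
      ring_nf
    rw [← ENNReal.ofReal_tsum_of_nonneg (fun k => Real.rpow_nonneg (by positivity) _) hsummable]
    exact ENNReal.ofReal_ne_top
  · -- degenerate case `S < 0` : all `ℓ m n = 0`
    have hS0 : ENNReal.ofReal S = 0 := ENNReal.ofReal_eq_zero.mpr hS.le
    rw [hS0, le_zero_iff] at hsum
    have hzero : ∀ m n, ℓ m n = 0 := by
      intro m n
      have := ENNReal.tsum_eq_zero.mp hsum (m, n)
      have := ENNReal.ofReal_eq_zero.mp this
      exact le_antisymm this (hpos m n)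
    have hLHS0 : (∑' k : ℕ, ENNReal.ofReal
        ((1 / ((k:ℝ) + 1)) * ∑ m ∈ Finset.range (k+1), ℓ m (k - m) ^ τ)) = 0 := by
      refine ENNReal.tsum_eq_zero.mpr fun k => ?_
      have : ∀ m ∈ Finset.range (k+1), ℓ m (k - m) ^ τ = 0 := fun m _ => by
        rw [hzero, Real.zero_rpow h0τ.ne']
      rw [Finset.sum_congr rfl this, Finset.sum_const, smul_zero, mul_zero, ENNReal.ofReal_zero]
    rw [hLHS0]
    exact ⟨zero_le, by simp⟩
end

section
/- Let Γ be a group of C^{1+τ} circle diffeomorphisms, G ⊂ Γ a finite set, I an interval, and suppose C > 0 is such that |log g'(x) − log g'(y)| ≤ C|x−y|^τ for all g ∈ G and all x,y. Fix n ∈ ℕ and elements g_{i₁},…,g_{i_n} ∈ G, and suppose M < ∞ satisfies Σ_{k=0}^{n−1} |g_{i_k}⋯g_{i_1}(I)|^τ ≤ M (with the k=0 term equal to |I|^τ). Let I' be an interval adjacent to I with |I'| ≤ |I| such that, for all 0 ≤ k < n, |g_{i_k}⋯g_{i_1}(I')| ≤ |g_{i_k}⋯g_{i_1}(I)|. Then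 for all x,y ∈ I ∪ I', the distortion of h = g_{i_n}⋯g_{i_1} satisfies h'(x)/h'(y) ≤ exp(2^τ C M). -/
open Set

/-- Distortion control in class `C^{1+τ}` (Lemma 2.2): if the sum of the `τ`-powers of the
lengths of the successive images of `I = [x₀,x₁]` is at most `M`, and the images of the
adjacent interval `I' = [x₁,x₂]` stay smaller than those of `I`, then the distortion of the
composition `h = g_{i_n}⋯g_{i_1}` on `I ∪ I'` is bounded by `exp(2^τ C M)`. -/
theorem stmt_10 (τ C M : ℝ) (hτ0 : 0 < τ) (hτ1 : τ < 1) (hC : 0 < C) (hM : 0 ≤ M)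
    (n : ℕ) (gs gs' : ℕ → ℝ → ℝ) (H : ℕ → ℝ → ℝ)
    (x₀ x₁ x₂ : ℝ) (hx01 : x₀ < x₁) (hx12 : x₁ < x₂)
    (hI'le : x₂ - x₁ ≤ x₁ - x₀)
    (hmono : ∀ k, StrictMono (gs k))
    (hderiv : ∀ k x, HasDerivAt (gs k) (gs' k x) x)
    (hpos : ∀ k x, 0 < gs' k x)
    (hHolder : ∀ k, ∀ x y : ℝ,
      |Real.log (gs' k x) - Real.log (gs' k y)| ≤ C * |x - y| ^ τ)
    (hH0 : ∀ x, H 0 x = x)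
    (hHs : ∀ k x, H (k+1) x = gs k (H k x))
    (hMsum : ∑ k ∈ Finset.range n, (H k x₁ - H k x₀) ^ τ ≤ M)
    (hI'small : ∀ k < n, H k x₂ - H k x₁ ≤ H k x₁ - H k x₀) :
    ∀ x ∈ Icc x₀ x₂, ∀ y ∈ Icc x₀ x₂,
      (∏ k ∈ Finset.range n, gs' k (H k x)) / (∏ k ∈ Finset.range n, gs' k (H k y))
        ≤ Real.exp ((2:ℝ) ^ τ * C * M) := by
  intro x hx y hy
  have hHmono : ∀ k, Monotone (H k) := by
    intro k
    induction k with
    | zero => intro a b h; simpa [hH0] using h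
    | succ k ih => intro a b h; rw [hHs, hHs]; exact ((hmono k).monotone (ih h))
  have hpx : 0 < ∏ k ∈ Finset.range n, gs' k (H k x) :=
    Finset.prod_pos fun k _ => hpos k _
  have hpy : 0 < ∏ k ∈ Finset.range n, gs' k (H k y) :=
    Finset.prod_pos fun k _ => hpos k _
  have key : Real.log ((∏ k ∈ Finset.range n, gs' k (H k x)) /
      (∏ k ∈ Finset.range n, gs' k (H k y))) ≤ (2:ℝ) ^ τ * C * M := by
    rw [Real.log_div hpx.ne' hpy.ne',
        Real.log_prod (fun k _ => (hpos k _).ne'),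
        Real.log_prod (fun k _ => (hpos k _).ne'),
        ← Finset.sum_sub_distrib]
    have hterm : ∀ k ∈ Finset.range n,
        Real.log (gs' k (H k x)) - Real.log (gs' k (H k y)) ≤
          (2:ℝ) ^ τ * C * (H k x₁ - H k x₀) ^ τ := by
      intro k hk
      have hkn := Finset.mem_range.mp hk
      have hL : (0:ℝ) ≤ H k x₁ - H k x₀ := sub_nonneg.mpr (hHmono k hx01.le)
      have habs : |H k x - H k y| ≤ 2 * (H k x₁ - H k x₀) := by
        have h1 : H k x ≤ H k x₂ := hHmono k hx.2
        have h2 : H k x₀ ≤ H k x := hHmono k hx.1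
        have h3 : H k y ≤ H k x₂ := hHmono k hy.2
        have h4 : H k x₀ ≤ H k y := hHmono k hy.1
        have h5 := hI'small k hkn
        rw [abs_le]
        constructor <;> linarith
      have h6 : |H k x - H k y| ^ τ ≤ (2 * (H k x₁ - H k x₀)) ^ τ :=
        Real.rpow_le_rpow (abs_nonneg _) habs hτ0.le
      have h7 : (2 * (H k x₁ - H k x₀)) ^ τ = (2:ℝ) ^ τ * (H k x₁ - H k x₀) ^ τ :=
        Real.mul_rpow (by norm_num) hL
      calc Real.log (gs' k (H k x)) - Real.log (gs' k (H k y))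
          ≤ |Real.log (gs' k (H k x)) - Real.log (gs' k (H k y))| := le_abs_self _
        _ ≤ C * |H k x - H k y| ^ τ := hHolder k _ _
        _ ≤ C * ((2:ℝ) ^ τ * (H k x₁ - H k x₀) ^ τ) := by
            rw [← h7]; exact mul_le_mul_of_nonneg_left h6 hC.le
        _ = (2:ℝ) ^ τ * C * (H k x₁ - H k x₀) ^ τ := by ring
    calc ∑ k ∈ Finset.range n, (Real.log (gs' k (H k x)) - Real.log (gs' k (H k y)))
        ≤ ∑ k ∈ Finset.range n, (2:ℝ) ^ τ * C * (H k x₁ - H k x₀) ^ τ :=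
          Finset.sum_le_sum hterm
      _ = (2:ℝ) ^ τ * C * ∑ k ∈ Finset.range n, (H k x₁ - H k x₀) ^ τ := by
          rw [Finset.mul_sum]
      _ ≤ (2:ℝ) ^ τ * C * M := by
          apply mul_le_mul_of_nonneg_left hMsum
          positivity
  calc (∏ k ∈ Finset.range n, gs' k (H k x)) / (∏ k ∈ Finset.range n, gs' k (H k y))
      = Real.exp (Real.log _) := (Real.exp_log (div_pos hpx hpy)).symm
    _ ≤ Real.exp ((2:ℝ) ^ τ * C * M) := Real.exp_le_exp.mpr key
end

section
/- Let f, g, h be commuting C^1 diffeomorphisms of [0,1], with f and g of class C^{1+τ} where τ ≥ (√5−1)/2. Suppose there exist pairwise disjoint open intervals I_{i,j} ⊂ (0,1), (i,j) ∈ ℤ², arranged in lexicographic order, such that f(I_{i,j}) = I_{i−1,j}, g(I_{i,j}) = I_{i,j−1}, and h(I_{i,j}) = I_{i,j} for all (i,j). Then h restricted to the union of the I_{i,j} is the identity. -/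
open Set Filter

private lemma endpoint_map (φ : ℝ → ℝ) (hc : ContinuousOn φ (Icc 0 1))
    (hm : StrictMonoOn φ (Icc 0 1)) {a b a' b' : ℝ} (hab : a < b) (hab' : a' < b')
    (ha : a ∈ Icc (0:ℝ) 1) (hb : b ∈ Icc (0:ℝ) 1)
    (himg : φ '' Ioo a b = Ioo a' b') : φ a = a' ∧ φ b = b' := by
  have hIccsub : Icc a b ⊆ Icc (0:ℝ) 1 := Icc_subset_Icc ha.1 hb.2
  have hcl : closure (Ioo a b) = Icc a b := closure_Ioo hab.ne
  have hccl : ContinuousOn φ (closure (Ioo a b)) := hc.mono (by rw [hcl]; exact hIccsub)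
  have hsubIcc : Ioo a b ⊆ Icc (0:ℝ) 1 := fun z hz => hIccsub (Ioo_subset_Icc_self hz)
  have hmem : ∀ c ∈ Icc a b, φ c ∈ Icc a' b' := by
    intro c hcmem
    have : φ c ∈ closure (φ '' Ioo a b) := hccl.image_closure ⟨c, by rw [hcl]; exact hcmem, rfl⟩
    rw [himg, closure_Ioo hab'.ne] at this
    exact this
  constructor
  · have hlt : ∀ y ∈ Ioo a' b', φ a < y := by
      intro y hy
      rw [← himg] at hy
      obtain ⟨z, hz, rfl⟩ := hy
      exact hm (hIccsub ⟨le_rfl, hab.le⟩) (hsubIcc hz) hz.1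
    have h1 : a' ≤ φ a := (hmem a ⟨le_rfl, hab.le⟩).1
    rcases eq_or_lt_of_le h1 with h | h
    · exact h.symm
    · obtain ⟨y, hy1, hy2⟩ := exists_between (lt_min h hab')
      have := hlt y ⟨hy1, hy2.trans_le (min_le_right _ _)⟩
      have h3 : y < φ a := hy2.trans_le (min_le_left _ _)
      linarith
  · have hlt : ∀ y ∈ Ioo a' b', y < φ b := by
      intro y hy
      rw [← himg] at hy
      obtain ⟨z, hz, rfl⟩ := hy
      exact hm (hsubIcc hz) (hIccsub ⟨hab.le, le_rfl⟩) hz.2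
    have h1 : φ b ≤ b' := (hmem b ⟨hab.le, le_rfl⟩).2
    rcases eq_or_lt_of_le h1 with h | h
    · exact h
    · obtain ⟨y, hy1, hy2⟩ := exists_between (max_lt h hab')
      have := hlt y ⟨(le_max_right _ _).trans_lt hy1, hy2⟩
      have h3 : φ b < y := (le_max_left _ _).trans_lt hy1
      linarith

private lemma iter_deriv (φ φ' : ℝ → ℝ)
    (hmaps : MapsTo φ (Icc 0 1) (Icc 0 1))
    (hd : ∀ x ∈ Icc (0:ℝ) 1, HasDerivWithinAt φ (φ' x) (Icc 0 1) x) :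
    ∀ (k : ℕ), ∀ x ∈ Icc (0:ℝ) 1,
      HasDerivWithinAt (φ^[k]) (∏ m ∈ Finset.range k, φ' (φ^[m] x)) (Icc 0 1) x := by
  intro k
  induction k with
  | zero => intro x hx; simpa using hasDerivWithinAt_id x (Icc 0 1)
  | succ k ih =>
    intro x hx
    have hiter : MapsTo (φ^[k]) (Icc 0 1) (Icc 0 1) := hmaps.iterate k
    have h1 := (hd (φ^[k] x) (hiter hx)).comp x (ih x hx) hiter
    rw [Function.iterate_succ', Finset.prod_range_succ]
    rw [mul_comm]
    exact h1

private lemma comm_iter (φ ψ : ℝ → ℝ) (hψ : MapsTo ψ (Icc 0 1) (Icc 0 1))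
    (hcomm : ∀ x ∈ Icc (0:ℝ) 1, φ (ψ x) = ψ (φ x)) :
    ∀ (n : ℕ), ∀ x ∈ Icc (0:ℝ) 1, φ (ψ^[n] x) = ψ^[n] (φ x) := by
  intro n
  induction n with
  | zero => simp
  | succ n ih =>
    intro x hx
    rw [Function.iterate_succ_apply', Function.iterate_succ_apply',
      hcomm _ (hψ.iterate n hx), ih x hx]

private lemma log_lip_aux {a b m : ℝ} (hm : 0 < m) (ha : m ≤ a) (hb : m ≤ b) (hba : b ≤ a) :
    Real.log a - Real.log b ≤ (a - b) / m := by
  have hb0 : 0 < b := hm.trans_le hb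
  have ha0 : 0 < a := hm.trans_le ha
  have h1 : Real.log a - Real.log b = Real.log (a / b) := (Real.log_div ha0.ne' hb0.ne').symm
  have h2 : Real.log (a / b) ≤ a / b - 1 := Real.log_le_sub_one_of_pos (by positivity)
  have h3 : a / b - 1 = (a - b) / b := by field_simp
  have h4 : (a - b) / b ≤ (a - b) / m := by
    apply div_le_div_of_nonneg_left (by linarith) hm hb
  linarith [h1, h2, h3 ▸ h2]

private lemma log_lip {a b m : ℝ} (hm : 0 < m) (ha : m ≤ a) (hb : m ≤ b) :
    |Real.log a - Real.log b| ≤ |a - b| / m := by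
  rcases le_total b a with hba | hba
  · rw [abs_of_nonneg (by linarith : (0:ℝ) ≤ a - b),
      abs_of_nonneg (sub_nonneg.2 (Real.log_le_log (hm.trans_le hb) hba))]
    exact log_lip_aux hm ha hb hba
  · rw [abs_sub_comm, abs_sub_comm a b,
      abs_of_nonneg (by linarith : (0:ℝ) ≤ b - a),
      abs_of_nonneg (sub_nonneg.2 (Real.log_le_log (hm.trans_le ha) hba))]
    exact log_lip_aux hm hb ha hba

private lemma holder_cont {φ : ℝ → ℝ} {C τ : ℝ} (hτ : 0 < τ)
    (hH : ∀ x ∈ Icc (0:ℝ) 1, ∀ y ∈ Icc (0:ℝ) 1, |φ x - φ y| ≤ C * |x - y| ^ τ) :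
    ContinuousOn φ (Icc 0 1) := by
  intro x hx
  have habs : Tendsto (fun y : ℝ => |y - x|) (nhdsWithin x (Icc 0 1)) (nhds 0) := by
    have h1 : Tendsto (fun y : ℝ => |y - x|) (nhds x) (nhds |x - x|) :=
      ((continuous_id.sub continuous_const).abs).tendsto x
    simpa using h1.mono_left nhdsWithin_le_nhds
  have hrpow : Tendsto (fun t : ℝ => t ^ τ) (nhds 0) (nhds 0) := by
    have := (Real.continuousAt_rpow_const 0 τ (Or.inr hτ.le)).tendsto
    simpa [Real.zero_rpow hτ.ne'] using this
  have h1 : Tendsto (fun y : ℝ => C * |y - x| ^ τ) (nhdsWithin x (Icc 0 1)) (nhds 0) := by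
    have := (hrpow.comp habs).const_mul C
    simpa using this
  have key : Tendsto (fun y => φ y - φ x) (nhdsWithin x (Icc 0 1)) (nhds 0) := by
    apply squeeze_zero_norm' _ h1
    filter_upwards [self_mem_nhdsWithin] with y hy
    simpa [Real.norm_eq_abs] using hH y hy x hx
  have := key.add_const (φ x)
  simpa [ContinuousWithinAt] using this

/-- Proposition 1.3: if `f, g, h` are commuting `C^1` diffeomorphisms of `[0,1]`, with
`f` and `g` of class `C^{1+τ}` for `τ ≥ (√5-1)/2`, and there are pairwise disjoint open
intervals `I_{i,j} ⊂ (0,1)` in lexicographic order with `f(I_{i,j}) = I_{i-1,j}`,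
`g(I_{i,j}) = I_{i,j-1}`, `h(I_{i,j}) = I_{i,j}`, then `h` is the identity on `⋃ I_{i,j}`. -/
theorem stmt_12 (τ : ℝ) (hτ : (Real.sqrt 5 - 1) / 2 ≤ τ) (hτ1 : τ < 1)
    (f g h f' g' h' : ℝ → ℝ) (Cf Cg : ℝ)
    (hf0 : f 0 = 0) (hf1 : f 1 = 1) (hg0 : g 0 = 0) (hg1 : g 1 = 1)
    (hh0 : h 0 = 0) (hh1 : h 1 = 1)
    (hfimg : f '' Icc 0 1 = Icc 0 1) (hgimg : g '' Icc 0 1 = Icc 0 1)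
    (hhimg : h '' Icc 0 1 = Icc 0 1)
    (hfmono : StrictMonoOn f (Icc 0 1)) (hgmono : StrictMonoOn g (Icc 0 1))
    (hhmono : StrictMonoOn h (Icc 0 1))
    (hfderiv : ∀ x ∈ Icc (0:ℝ) 1, HasDerivWithinAt f (f' x) (Icc 0 1) x)
    (hgderiv : ∀ x ∈ Icc (0:ℝ) 1, HasDerivWithinAt g (g' x) (Icc 0 1) x)
    (hhderiv : ∀ x ∈ Icc (0:ℝ) 1, HasDerivWithinAt h (h' x) (Icc 0 1) x)
    (hf'pos : ∀ x ∈ Icc (0:ℝ) 1, 0 < f' x)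
    (hg'pos : ∀ x ∈ Icc (0:ℝ) 1, 0 < g' x)
    (hh'pos : ∀ x ∈ Icc (0:ℝ) 1, 0 < h' x)
    (hh'cont : ContinuousOn h' (Icc 0 1))
    (hfHolder : ∀ x ∈ Icc (0:ℝ) 1, ∀ y ∈ Icc (0:ℝ) 1, |f' x - f' y| ≤ Cf * |x - y| ^ τ)
    (hgHolder : ∀ x ∈ Icc (0:ℝ) 1, ∀ y ∈ Icc (0:ℝ) 1, |g' x - g' y| ≤ Cg * |x - y| ^ τ)
    (hcommfg : ∀ x ∈ Icc (0:ℝ) 1, f (g x) = g (f x))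
    (hcommfh : ∀ x ∈ Icc (0:ℝ) 1, f (h x) = h (f x))
    (hcommgh : ∀ x ∈ Icc (0:ℝ) 1, g (h x) = h (g x))
    -- the intervals I_{i,j} = (ia i j, ib i j)
    (ia ib : ℤ → ℤ → ℝ)
    (hlt : ∀ i j, ia i j < ib i j)
    (hsub : ∀ i j, Ioo (ia i j) (ib i j) ⊆ Ioo (0:ℝ) 1)
    -- lexicographic arrangement (hence pairwise disjointness)
    (hlex : ∀ i j i' j' : ℤ, (i < i' ∨ (i = i' ∧ j < j')) → ib i j ≤ ia i' j')
    (hfI : ∀ i j, f '' Ioo (ia i j) (ib i j) = Ioo (ia (i-1) j) (ib (i-1) j))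
    (hgI : ∀ i j, g '' Ioo (ia i j) (ib i j) = Ioo (ia i (j-1)) (ib i (j-1)))
    (hhI : ∀ i j, h '' Ioo (ia i j) (ib i j) = Ioo (ia i j) (ib i j)) :
    ∀ i j : ℤ, ∀ x ∈ Ioo (ia i j) (ib i j), h x = x := by
  intro i j x hx
  -- τ facts
  have hsqrt5 : (1:ℝ) < Real.sqrt 5 := by
    rw [show (1:ℝ) = Real.sqrt 1 from (Real.sqrt_one).symm]
    exact Real.sqrt_lt_sqrt (by norm_num) (by norm_num)
  have hτpos : 0 < τ := by linarith
  have hττ : 1 ≤ (1 + τ) * τ := by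
    nlinarith [Real.sq_sqrt (show (0:ℝ) ≤ 5 by norm_num), Real.sqrt_nonneg 5]
  -- continuity and maps
  have fcont : ContinuousOn f (Icc 0 1) := fun y hy => (hfderiv y hy).continuousWithinAt
  have gcont : ContinuousOn g (Icc 0 1) := fun y hy => (hgderiv y hy).continuousWithinAt
  have hcont : ContinuousOn h (Icc 0 1) := fun y hy => (hhderiv y hy).continuousWithinAt
  have fmaps : MapsTo f (Icc 0 1) (Icc 0 1) := by
    intro y hy; rw [← hfimg]; exact mem_image_of_mem f hy
  have gmaps : MapsTo g (Icc 0 1) (Icc 0 1) := by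
    intro y hy; rw [← hgimg]; exact mem_image_of_mem g hy
  have hmaps : MapsTo h (Icc 0 1) (Icc 0 1) := by
    intro y hy; rw [← hhimg]; exact mem_image_of_mem h hy
  have hIooIcc : ∀ i' j', Ioo (ia i' j') (ib i' j') ⊆ Icc (0:ℝ) 1 :=
    fun i' j' => (hsub i' j').trans Ioo_subset_Icc_self
  -- endpoints in Icc
  have hia0 : ∀ i' j', 0 ≤ ia i' j' := by
    intro i' j'; by_contra hcon; push_neg at hcon
    obtain ⟨z, hz1, hz2⟩ := exists_between (lt_min (hlt i' j') hcon)
    have := (hsub i' j' ⟨hz1, hz2.trans_le (min_le_left _ _)⟩).1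
    have h2 := hz2.trans_le (min_le_right _ _)
    linarith
  have hib1 : ∀ i' j', ib i' j' ≤ 1 := by
    intro i' j'; by_contra hcon; push_neg at hcon
    obtain ⟨z, hz1, hz2⟩ := exists_between (max_lt (hlt i' j') hcon)
    have := (hsub i' j' ⟨(le_max_left _ _).trans_lt hz1, hz2⟩).2
    have h2 := (le_max_right _ _).trans_lt hz1
    linarith
  have hiaIcc : ∀ i' j', ia i' j' ∈ Icc (0:ℝ) 1 :=
    fun i' j' => ⟨hia0 i' j', (hlt i' j').le.trans (hib1 i' j')⟩
  have hibIcc : ∀ i' j', ib i' j' ∈ Icc (0:ℝ) 1 :=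
    fun i' j' => ⟨(hia0 i' j').trans (hlt i' j').le, hib1 i' j'⟩
  -- endpoint maps
  have hfe : ∀ i' j', f (ia i' j') = ia (i'-1) j' ∧ f (ib i' j') = ib (i'-1) j' :=
    fun i' j' => endpoint_map f fcont hfmono (hlt i' j') (hlt (i'-1) j')
      (hiaIcc i' j') (hibIcc i' j') (hfI i' j')
  have hge : ∀ i' j', g (ia i' j') = ia i' (j'-1) ∧ g (ib i' j') = ib i' (j'-1) :=
    fun i' j' => endpoint_map g gcont hgmono (hlt i' j') (hlt i' (j'-1))
      (hiaIcc i' j') (hibIcc i' j') (hgI i' j')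
  have hhe : ∀ i' j', h (ia i' j') = ia i' j' ∧ h (ib i' j') = ib i' j' :=
    fun i' j' => endpoint_map h hcont hhmono (hlt i' j') (hlt i' j')
      (hiaIcc i' j') (hibIcc i' j') (hhI i' j')
  -- monotonicity of endpoints
  have hiaMonoj : ∀ i' : ℤ, ∀ {j₁ j₂ : ℤ}, j₁ ≤ j₂ → ia i' j₁ ≤ ia i' j₂ := by
    intro i' j₁ j₂ hj
    rcases eq_or_lt_of_le hj with rfl | hj
    · exact le_refl _
    · exact ((hlt i' j₁).le.trans (hlex i' j₁ i' j₂ (Or.inr ⟨rfl, hj⟩)))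
  have hibMonoj : ∀ i' : ℤ, ∀ {j₁ j₂ : ℤ}, j₁ ≤ j₂ → ib i' j₁ ≤ ib i' j₂ := by
    intro i' j₁ j₂ hj
    rcases eq_or_lt_of_le hj with rfl | hj
    · exact le_refl _
    · exact ((hlex i' j₁ i' j₂ (Or.inr ⟨rfl, hj⟩)).trans (hlt i' j₂).le)
  -- A and B
  have hbddia : ∀ i', BddBelow (range fun n : ℕ => ia i' (-(n:ℤ))) := by
    intro i'; exact ⟨0, by rintro y ⟨n, rfl⟩; exact hia0 _ _⟩
  have hbddib : ∀ i', BddAbove (range fun n : ℕ => ib i' (n:ℤ)) := by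
    intro i'; exact ⟨1, by rintro y ⟨n, rfl⟩; exact hib1 _ _⟩
  set A : ℤ → ℝ := fun i' => ⨅ n : ℕ, ia i' (-(n:ℤ)) with hAdef
  set B : ℤ → ℝ := fun i' => ⨆ n : ℕ, ib i' (n:ℤ) with hBdef
  have hAle : ∀ i' j', A i' ≤ ia i' j' :=
    fun i' j' => ciInf_le_of_le (hbddia i') ((-j').toNat) (hiaMonoj i' (by omega))
  have hBge : ∀ i' j', ib i' j' ≤ B i' :=
    fun i' j' => le_ciSup_of_le (hbddib i') (j'.toNat) (hibMonoj i' (by omega))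
  have hA0 : ∀ i', 0 ≤ A i' := fun i' => le_ciInf fun n => hia0 _ _
  have hB1 : ∀ i', B i' ≤ 1 := fun i' => ciSup_le fun n => hib1 _ _
  have hAB : ∀ i', A i' < B i' := fun i' =>
    lt_of_le_of_lt (hAle i' 0) (lt_of_lt_of_le (hlt i' 0) (hBge i' 0))
  have hBA : ∀ i₁ i₂ : ℤ, i₁ < i₂ → B i₁ ≤ A i₂ := fun i₁ i₂ h12 =>
    ciSup_le fun n => le_ciInf fun m => hlex i₁ (n:ℤ) i₂ (-(m:ℤ)) (Or.inl h12)
  have hAIcc : ∀ i', A i' ∈ Icc (0:ℝ) 1 := fun i' => ⟨hA0 i', (hAle i' 0).trans ((hiaIcc i' 0).2)⟩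
  have hBIcc : ∀ i', B i' ∈ Icc (0:ℝ) 1 := fun i' => ⟨((hibIcc i' 0).1).trans (hBge i' 0), hB1 i'⟩
  have htendA : ∀ i', Tendsto (fun n : ℕ => ia i' (-(n:ℤ))) atTop (nhds (A i')) := fun i' =>
    tendsto_atTop_ciInf (fun n m hnm => hiaMonoj i' (by omega)) (hbddia i')
  have htendB : ∀ i', Tendsto (fun n : ℕ => ib i' (n:ℤ)) atTop (nhds (B i')) := fun i' =>
    tendsto_atTop_ciSup (fun n m hnm => hibMonoj i' (by omega)) (hbddib i')
  have tendsto_in : ∀ (u : ℕ → ℝ) (L : ℝ), (∀ n, u n ∈ Icc (0:ℝ) 1) →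
      Tendsto u atTop (nhds L) → Tendsto u atTop (nhdsWithin L (Icc 0 1)) := fun u L hu hL =>
    tendsto_nhdsWithin_of_tendsto_nhds_of_eventually_within _ hL (Eventually.of_forall hu)
  have hgA : ∀ i', g (A i') = A i' := by
    intro i'
    have h1 : Tendsto (fun n : ℕ => g (ia i' (-(n:ℤ)))) atTop (nhds (g (A i'))) :=
      ((gcont (A i') (hAIcc i')).tendsto).comp (tendsto_in _ _ (fun n => hiaIcc _ _) (htendA i'))
    have h2 : (fun n : ℕ => g (ia i' (-(n:ℤ)))) = fun n : ℕ => ia i' (-((n+1:ℕ):ℤ)) := by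
      funext n; rw [(hge i' (-(n:ℤ))).1]; congr 1; push_cast; ring
    have h3 : Tendsto (fun n : ℕ => ia i' (-((n+1:ℕ):ℤ))) atTop (nhds (A i')) :=
      (htendA i').comp (tendsto_add_atTop_nat 1)
    rw [h2] at h1
    exact tendsto_nhds_unique h1 h3
  have hgB : ∀ i', g (B i') = B i' := by
    intro i'
    have h1 : Tendsto (fun n : ℕ => g (ib i' (n:ℤ))) atTop (nhds (g (B i'))) :=
      ((gcont (B i') (hBIcc i')).tendsto).comp (tendsto_in _ _ (fun n => hibIcc _ _) (htendB i'))
    have h3 : Tendsto (fun n : ℕ => ib i' ((n-1:ℕ):ℤ)) atTop (nhds (B i')) :=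
      (htendB i').comp (tendsto_sub_atTop_nat 1)
    have h4 : Tendsto (fun n : ℕ => g (ib i' (n:ℤ))) atTop (nhds (B i')) := by
      apply h3.congr'
      filter_upwards [eventually_ge_atTop 1] with n hn
      rw [(hge i' (n:ℤ)).2]; congr 1; omega
    exact tendsto_nhds_unique h1 h4
  -- the accumulation point p
  have hiaMonoi : ∀ {i₁ i₂ : ℤ} (j' : ℤ), i₁ ≤ i₂ → ia i₁ j' ≤ ia i₂ j' := by
    intro i₁ i₂ j' hi
    rcases eq_or_lt_of_le hi with rfl | hi
    · exact le_refl _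
    · exact (hlt i₁ j').le.trans (hlex i₁ j' i₂ j' (Or.inl hi))
  have hbddp : BddBelow (range fun n : ℕ => ia (i - (n:ℤ)) j) :=
    ⟨0, by rintro y ⟨n, rfl⟩; exact hia0 _ _⟩
  set p : ℝ := ⨅ n : ℕ, ia (i - (n:ℤ)) j with hpdef
  have hptend : Tendsto (fun n : ℕ => ia (i - (n:ℤ)) j) atTop (nhds p) :=
    tendsto_atTop_ciInf (fun n m hnm => hiaMonoi j (by omega)) hbddp
  have hpIcc : p ∈ Icc (0:ℝ) 1 := by
    refine ⟨le_ciInf fun n => hia0 _ _, ?_⟩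
    have h1 : p ≤ ia i j := by simpa using ciInf_le hbddp 0
    exact h1.trans (hiaIcc i j).2
  have hfp : f p = p := by
    have h1 : Tendsto (fun n : ℕ => f (ia (i - (n:ℤ)) j)) atTop (nhds (f p)) :=
      ((fcont p hpIcc).tendsto).comp (tendsto_in _ _ (fun n => hiaIcc _ _) hptend)
    have h2 : (fun n : ℕ => f (ia (i - (n:ℤ)) j)) = fun n : ℕ => ia (i - ((n+1:ℕ):ℤ)) j := by
      funext n; rw [(hfe (i - (n:ℤ)) j).1]; congr 1; push_cast; ring
    have h3 : Tendsto (fun n : ℕ => ia (i - ((n+1:ℕ):ℤ)) j) atTop (nhds p) :=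
      hptend.comp (tendsto_add_atTop_nat 1)
    rw [h2] at h1; exact tendsto_nhds_unique h1 h3
  have hhp : h p = p := by
    have h1 : Tendsto (fun n : ℕ => h (ia (i - (n:ℤ)) j)) atTop (nhds (h p)) :=
      ((hcont p hpIcc).tendsto).comp (tendsto_in _ _ (fun n => hiaIcc _ _) hptend)
    have h2 : (fun n : ℕ => h (ia (i - (n:ℤ)) j)) = fun n : ℕ => ia (i - (n:ℤ)) j :=
      funext fun n => (hhe _ _).1
    rw [h2] at h1; exact tendsto_nhds_unique h1 hptend
  have hibtendp : Tendsto (fun n : ℕ => ib (i - (n:ℤ)) j) atTop (nhds p) := by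
    apply tendsto_of_tendsto_of_tendsto_of_le_of_le' hptend
      (hptend.comp (tendsto_sub_atTop_nat 1))
    · exact Eventually.of_forall fun n => (hlt _ _).le
    · filter_upwards [eventually_ge_atTop 1] with n hn
      exact hlex (i - (n:ℤ)) j (i - ((n-1:ℕ):ℤ)) j (Or.inl (by omega))
  -- iterate memberships
  have memF : ∀ k : ℕ, f^[k] x ∈ Ioo (ia (i - (k:ℤ)) j) (ib (i - (k:ℤ)) j) := by
    intro k; induction k with
    | zero => simpa using hx
    | succ k ih =>
      rw [Function.iterate_succ_apply']
      have h1 : f (f^[k] x) ∈ f '' Ioo (ia (i - (k:ℤ)) j) (ib (i - (k:ℤ)) j) :=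
        mem_image_of_mem f ih
      rw [hfI] at h1
      have he : i - (k:ℤ) - 1 = i - ((k+1:ℕ):ℤ) := by push_cast; ring
      rwa [he] at h1
  have hfkx : Tendsto (fun k : ℕ => f^[k] x) atTop (nhds p) :=
    tendsto_of_tendsto_of_tendsto_of_le_of_le' hptend hibtendp
      (Eventually.of_forall fun k => (memF k).1.le) (Eventually.of_forall fun k => (memF k).2.le)
  have memH : ∀ y ∈ Ioo (ia i j) (ib i j), h y ∈ Ioo (ia i j) (ib i j) := by
    intro y hy; rw [← hhI i j]; exact mem_image_of_mem h hy
  have memHk : ∀ y ∈ Ioo (ia i j) (ib i j), ∀ n : ℕ, h^[n] y ∈ Ioo (ia i j) (ib i j) := by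
    intro y hy n; induction n with
    | zero => simpa using hy
    | succ n ih => rw [Function.iterate_succ_apply']; exact memH _ ih
  -- Hölder constants nonneg
  have hCg0 : 0 ≤ Cg := by
    have h1 := hgHolder 0 (left_mem_Icc.2 zero_le_one) 1 (right_mem_Icc.2 zero_le_one)
    have h2 : |(0:ℝ) - 1| = 1 := by norm_num
    rw [h2, Real.one_rpow, mul_one] at h1
    exact (abs_nonneg _).trans h1
  have hCf0 : 0 ≤ Cf := by
    have h1 := hfHolder 0 (left_mem_Icc.2 zero_le_one) 1 (right_mem_Icc.2 zero_le_one)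
    have h2 : |(0:ℝ) - 1| = 1 := by norm_num
    rw [h2, Real.one_rpow, mul_one] at h1
    exact (abs_nonneg _).trans h1
  have hgAt : ∀ y ∈ Ioo (0:ℝ) 1, HasDerivAt g (g' y) y := fun y hy =>
    (hgderiv y (Ioo_subset_Icc_self hy)).hasDerivAt (Icc_mem_nhds hy.1 hy.2)
  have hhAt : ∀ y ∈ Ioo (0:ℝ) 1, HasDerivAt h (h' y) y := fun y hy =>
    (hhderiv y (Ioo_subset_Icc_self hy)).hasDerivAt (Icc_mem_nhds hy.1 hy.2)
  -- key length bound
  have key1 : ∀ i' j', ib i' j' - ia i' j' ≤ Cg * (B i' - A i') ^ ((1:ℝ) + τ) := by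
    intro i' j'
    have hBApos : (0:ℝ) < B i' - A i' := sub_pos.2 (hAB i')
    obtain ⟨ξ, hξ, hξ1⟩ := exists_hasDerivAt_eq_slope g g' (hAB i')
      (gcont.mono (Icc_subset_Icc (hAIcc i').1 (hBIcc i').2))
      (fun y hy => hgAt y ⟨(hA0 i').trans_lt hy.1, hy.2.trans_le (hB1 i')⟩)
    rw [hgB, hgA] at hξ1
    have hξ1' : g' ξ = 1 := by rw [hξ1]; field_simp
    have hRHS0 : 0 ≤ Cg * (B i' - A i') ^ ((1:ℝ) + τ) :=
      mul_nonneg hCg0 (Real.rpow_nonneg hBApos.le _)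
    have hpt : ∀ y ∈ Ioo (ia i' j') (ib i' j'),
        y - ia i' j' ≤ Cg * (B i' - A i') ^ ((1:ℝ) + τ) := by
      intro y hy
      have hAy : A i' < y := (hAle i' j').trans_lt hy.1
      have hyB : y < B i' := hy.2.trans_le (hBge i' j')
      obtain ⟨η, hη, hη1⟩ := exists_hasDerivAt_eq_slope g g' hAy
        (gcont.mono (Icc_subset_Icc (hAIcc i').1 ((hIooIcc i' j' hy).2)))
        (fun z hz => hgAt z ⟨(hA0 i').trans_lt hz.1, hz.2.trans (hsub i' j' hy).2⟩)
      rw [hgA] at hη1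
      have hgy : g y - A i' = g' η * (y - A i') := by
        rw [hη1, div_mul_cancel₀ _ (sub_pos.2 hAy).ne']
      -- g y ≤ ia i' j'
      have hgyIoo : g y ∈ Ioo (ia i' (j'-1)) (ib i' (j'-1)) := by
        rw [← hgI i' j']; exact mem_image_of_mem g hy
      have hgyle : g y ≤ ia i' j' :=
        hgyIoo.2.le.trans (hlex i' (j'-1) i' j' (Or.inr ⟨rfl, by omega⟩))
      -- Hölder bound
      have habs : |ξ - η| ≤ B i' - A i' := by
        rw [abs_le]; constructor <;> [skip; skip] <;>
          [linarith [hξ.1, hξ.2, hη.1, hη.2, hyB]; linarith [hξ.1, hξ.2, hη.1, hη.2, hyB]]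
      have h4 : |g' ξ - g' η| ≤ Cg * (B i' - A i') ^ τ := by
        have h5 := hgHolder ξ ⟨(hA0 i').trans hξ.1.le, hξ.2.le.trans (hB1 i')⟩
          η ⟨(hA0 i').trans hη.1.le, hη.2.le.trans (hyB.le.trans (hB1 i'))⟩
        refine h5.trans ?_
        exact mul_le_mul_of_nonneg_left
          (Real.rpow_le_rpow (abs_nonneg _) habs hτpos.le) hCg0
      have h6 : y - g y = (y - A i') * (g' ξ - g' η) := by
        rw [hξ1']; linarith [hgy]
      have h7 : y - g y ≤ (y - A i') * (Cg * (B i' - A i') ^ τ) := by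
        rw [h6]
        exact mul_le_mul_of_nonneg_left ((le_abs_self _).trans h4) (by linarith)
      have h8 : (y - A i') * (Cg * (B i' - A i') ^ τ) ≤
          (B i' - A i') * (Cg * (B i' - A i') ^ τ) := by
        apply mul_le_mul_of_nonneg_right (by linarith)
        exact mul_nonneg hCg0 (Real.rpow_nonneg hBApos.le _)
      have h9 : (B i' - A i') * (Cg * (B i' - A i') ^ τ) = Cg * (B i' - A i') ^ ((1:ℝ)+τ) := by
        rw [Real.rpow_add hBApos, Real.rpow_one]; ring
      linarith
    by_contra hcon
    push_neg at hcon
    obtain ⟨z, hz1, hz2⟩ := exists_between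
      (show ia i' j' + Cg * (B i' - A i') ^ ((1:ℝ) + τ) < ib i' j' by linarith)
    have hzIoo : z ∈ Ioo (ia i' j') (ib i' j') := ⟨by linarith, hz2⟩
    linarith [hpt z hzIoo]
  -- sum bounds
  have hsumBA : ∀ k : ℕ, ∑ m ∈ Finset.range (k+1), (B (i - (m:ℤ)) - A (i - (m:ℤ)))
      ≤ B i - A (i - (k:ℤ)) := by
    intro k; induction k with
    | zero => simp
    | succ k ih =>
      rw [Finset.sum_range_succ]
      have h1 : B (i - ((k+1:ℕ):ℤ)) ≤ A (i - (k:ℤ)) := hBA _ _ (by omega)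
      linarith
  have hsum1 : ∀ k : ℕ, ∑ m ∈ Finset.range k, (B (i - (m:ℤ)) - A (i - (m:ℤ))) ≤ 1 := by
    intro k
    cases k with
    | zero => simp
    | succ k => linarith [hsumBA k, hB1 i, hA0 (i - (k:ℤ))]
  have hlenτ : ∀ m : ℕ, (ib (i - (m:ℤ)) j - ia (i - (m:ℤ)) j) ^ τ ≤
      Cg ^ τ * (B (i - (m:ℤ)) - A (i - (m:ℤ))) := by
    intro m
    set i' := i - (m:ℤ) with hi'
    have h0 : (0:ℝ) ≤ ib i' j - ia i' j := sub_nonneg.2 (hlt i' j).le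
    have hBApos : (0:ℝ) < B i' - A i' := sub_pos.2 (hAB i')
    have h1 : (ib i' j - ia i' j) ^ τ ≤ (Cg * (B i' - A i') ^ ((1:ℝ)+τ)) ^ τ :=
      Real.rpow_le_rpow h0 (key1 i' j) hτpos.le
    have h2 : (Cg * (B i' - A i') ^ ((1:ℝ)+τ)) ^ τ
        = Cg ^ τ * ((B i' - A i') ^ ((1:ℝ)+τ)) ^ τ :=
      Real.mul_rpow hCg0 (Real.rpow_nonneg hBApos.le _)
    have h3 : ((B i' - A i') ^ ((1:ℝ)+τ)) ^ τ = (B i' - A i') ^ (((1:ℝ)+τ) * τ) :=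
      (Real.rpow_mul hBApos.le _ _).symm
    have h4 : (B i' - A i') ^ (((1:ℝ)+τ)*τ) ≤ (B i' - A i') ^ (1:ℝ) :=
      Real.rpow_le_rpow_of_exponent_ge hBApos (by linarith [hB1 i', hA0 i']) hττ
    rw [Real.rpow_one] at h4
    refine h1.trans ?_
    rw [h2, h3]
    exact mul_le_mul_of_nonneg_left h4 (Real.rpow_nonneg hCg0 τ)
  have hsumlen : ∀ k : ℕ,
      ∑ m ∈ Finset.range k, (ib (i - (m:ℤ)) j - ia (i - (m:ℤ)) j) ^ τ ≤ Cg ^ τ := by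
    intro k
    calc ∑ m ∈ Finset.range k, (ib (i - (m:ℤ)) j - ia (i - (m:ℤ)) j) ^ τ
        ≤ ∑ m ∈ Finset.range k, Cg ^ τ * (B (i - (m:ℤ)) - A (i - (m:ℤ))) :=
          Finset.sum_le_sum fun m _ => hlenτ m
      _ = Cg ^ τ * ∑ m ∈ Finset.range k, (B (i - (m:ℤ)) - A (i - (m:ℤ))) :=
          (Finset.mul_sum _ _ _).symm
      _ ≤ Cg ^ τ * 1 := mul_le_mul_of_nonneg_left (hsum1 k) (Real.rpow_nonneg hCg0 τ)
      _ = Cg ^ τ := mul_one _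
  -- min of f'
  have f'cont : ContinuousOn f' (Icc 0 1) := holder_cont hτpos hfHolder
  obtain ⟨xm, hxm, hmin'⟩ := isCompact_Icc.exists_isMinOn (nonempty_Icc.2 zero_le_one) f'cont
  have hmin : ∀ y ∈ Icc (0:ℝ) 1, f' xm ≤ f' y := fun y hy => hmin' hy
  set mf := f' xm with hmfdef
  have hmf : 0 < mf := hf'pos xm hxm
  set M : ℝ := Cf / mf * Cg ^ τ with hMdef
  have hM0 : 0 ≤ M := mul_nonneg (div_nonneg hCf0 hmf.le) (Real.rpow_nonneg hCg0 τ)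
  set Pf : ℕ → ℝ → ℝ := fun k y => ∏ m ∈ Finset.range k, f' (f^[m] y) with hPfdef
  have hPfpos : ∀ (k : ℕ) (y : ℝ), y ∈ Icc (0:ℝ) 1 → 0 < Pf k y := fun k y hy =>
    Finset.prod_pos fun m _ => hf'pos _ ((fmaps.iterate m) hy)
  have memFgen : ∀ y ∈ Ioo (ia i j) (ib i j), ∀ k : ℕ,
      f^[k] y ∈ Ioo (ia (i - (k:ℤ)) j) (ib (i - (k:ℤ)) j) := by
    intro y hy k; induction k with
    | zero => simpa using hy
    | succ k ih =>
      rw [Function.iterate_succ_apply']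
      have h1 : f (f^[k] y) ∈ f '' Ioo (ia (i - (k:ℤ)) j) (ib (i - (k:ℤ)) j) :=
        mem_image_of_mem f ih
      rw [hfI] at h1
      have he : i - (k:ℤ) - 1 = i - ((k+1:ℕ):ℤ) := by push_cast; ring
      rwa [he] at h1
  -- distortion bound
  have hdist : ∀ y ∈ Ioo (ia i j) (ib i j), ∀ z ∈ Ioo (ia i j) (ib i j), ∀ k : ℕ,
      Pf k y ≤ Real.exp M * Pf k z := by
    intro y hy z hz k
    have hyI : y ∈ Icc (0:ℝ) 1 := hIooIcc i j hy
    have hzI : z ∈ Icc (0:ℝ) 1 := hIooIcc i j hz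
    have hlog : Real.log (Pf k y) - Real.log (Pf k z) ≤ M := by
      rw [hPfdef]
      simp only
      rw [Real.log_prod (s := Finset.range k) (fun m _ => (hf'pos _ ((fmaps.iterate m) hyI)).ne'),
          Real.log_prod (s := Finset.range k) (fun m _ => (hf'pos _ ((fmaps.iterate m) hzI)).ne'),
          ← Finset.sum_sub_distrib]
      calc ∑ m ∈ Finset.range k, (Real.log (f' (f^[m] y)) - Real.log (f' (f^[m] z)))
          ≤ ∑ m ∈ Finset.range k,
            (Cf / mf) * (ib (i-(m:ℤ)) j - ia (i-(m:ℤ)) j) ^ τ := by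
            apply Finset.sum_le_sum
            intro m _
            have hyIcc := (fmaps.iterate m) hyI
            have hzIcc := (fmaps.iterate m) hzI
            have h1 : |Real.log (f' (f^[m] y)) - Real.log (f' (f^[m] z))| ≤
                |f' (f^[m] y) - f' (f^[m] z)| / mf :=
              log_lip hmf (hmin _ hyIcc) (hmin _ hzIcc)
            have h2 : |f' (f^[m] y) - f' (f^[m] z)| ≤ Cf * |f^[m] y - f^[m] z| ^ τ :=
              hfHolder _ hyIcc _ hzIcc
            have hym := memFgen y hy m
            have hzm := memFgen z hz m
            have h3 : |f^[m] y - f^[m] z| ≤ ib (i-(m:ℤ)) j - ia (i-(m:ℤ)) j :=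
              abs_le.2 ⟨by linarith [hym.1, hym.2, hzm.1, hzm.2],
                by linarith [hym.1, hym.2, hzm.1, hzm.2]⟩
            have h4 : |f^[m] y - f^[m] z| ^ τ ≤ (ib (i-(m:ℤ)) j - ia (i-(m:ℤ)) j) ^ τ :=
              Real.rpow_le_rpow (abs_nonneg _) h3 hτpos.le
            calc Real.log (f' (f^[m] y)) - Real.log (f' (f^[m] z))
                ≤ |Real.log (f' (f^[m] y)) - Real.log (f' (f^[m] z))| := le_abs_self _
              _ ≤ |f' (f^[m] y) - f' (f^[m] z)| / mf := h1
              _ ≤ (Cf * |f^[m] y - f^[m] z| ^ τ) / mf := by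
                  exact div_le_div_of_nonneg_right h2 hmf.le
              _ = (Cf / mf) * |f^[m] y - f^[m] z| ^ τ := by ring
              _ ≤ (Cf / mf) * (ib (i-(m:ℤ)) j - ia (i-(m:ℤ)) j) ^ τ :=
                  mul_le_mul_of_nonneg_left h4 (div_nonneg hCf0 hmf.le)
        _ = (Cf / mf) * ∑ m ∈ Finset.range k, (ib (i-(m:ℤ)) j - ia (i-(m:ℤ)) j) ^ τ :=
            (Finset.mul_sum _ _ _).symm
        _ ≤ (Cf / mf) * Cg ^ τ :=
            mul_le_mul_of_nonneg_left (hsumlen k) (div_nonneg hCf0 hmf.le)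
        _ = M := rfl
    have hPy := hPfpos k y hyI
    have hPz := hPfpos k z hzI
    have h5 : Real.log (Pf k y) ≤ M + Real.log (Pf k z) := by linarith
    have h6 := Real.exp_le_exp.2 h5
    rwa [Real.exp_log hPy, Real.exp_add, Real.exp_log hPz] at h6
  -- product of h'-derivatives along h-orbit
  set Ph : ℕ → ℝ → ℝ := fun n y => ∏ m ∈ Finset.range n, h' (h^[m] y) with hPhdef
  have hPhpos : ∀ (n : ℕ) (y : ℝ), y ∈ Icc (0:ℝ) 1 → 0 < Ph n y := fun n y hy =>
    Finset.prod_pos fun m _ => hh'pos _ ((hmaps.iterate m) hy)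
  have hDf := iter_deriv f f' fmaps hfderiv
  have hDh := iter_deriv h h' hmaps hhderiv
  have hDhAt : ∀ (n : ℕ), ∀ y ∈ Ioo (0:ℝ) 1, HasDerivAt (h^[n]) (Ph n y) y := fun n y hy =>
    (hDh n y (Ioo_subset_Icc_self hy)).hasDerivAt (Icc_mem_nhds hy.1 hy.2)
  have hcommiter : ∀ (k n : ℕ), ∀ y ∈ Icc (0:ℝ) 1, h^[n] (f^[k] y) = f^[k] (h^[n] y) := by
    intro k n y hy
    have base := comm_iter f h hmaps hcommfh
    exact comm_iter (h^[n]) f fmaps (fun z hz => (base n z hz).symm) k y hy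
  have hconj : ∀ y ∈ Ioo (ia i j) (ib i j), ∀ n k : ℕ,
      Ph n (f^[k] y) * Pf k y = Pf k (h^[n] y) * Ph n y := by
    intro y hy n k
    have hy01 : y ∈ Ioo (0:ℝ) 1 := hsub i j hy
    have hyI : y ∈ Icc (0:ℝ) 1 := Ioo_subset_Icc_self hy01
    have D1 : HasDerivWithinAt (h^[n] ∘ f^[k]) (Ph n (f^[k] y) * Pf k y) (Icc 0 1) y :=
      (hDh n (f^[k] y) ((fmaps.iterate k) hyI)).comp y (hDf k y hyI) (fmaps.iterate k)
    have D2 : HasDerivWithinAt (f^[k] ∘ h^[n]) (Pf k (h^[n] y) * Ph n y) (Icc 0 1) y :=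
      (hDf k (h^[n] y) ((hmaps.iterate n) hyI)).comp y (hDh n y hyI) (hmaps.iterate n)
    have hnhds : Icc (0:ℝ) 1 ∈ nhds y := Icc_mem_nhds hy01.1 hy01.2
    have D1' := D1.hasDerivAt hnhds
    have D2' := D2.hasDerivAt hnhds
    have heq : (h^[n] ∘ f^[k]) =ᶠ[nhds y] (f^[k] ∘ h^[n]) := by
      filter_upwards [hnhds] with z hz
      exact hcommiter k n z hz
    exact (D1'.congr_of_eventuallyEq heq.symm).unique D2'
  have hcontiter : ∀ n : ℕ, ContinuousOn (h^[n]) (Icc 0 1) := by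
    intro n; induction n with
    | zero => simpa using continuousOn_id
    | succ n ih =>
      rw [Function.iterate_succ']
      exact hcont.comp ih (hmaps.iterate n)
  have hhit : ∀ n : ℕ, h^[n] p = p := fun n => Function.iterate_fixed hhp n
  have hlim : ∀ y ∈ Ioo (ia i j) (ib i j), ∀ n : ℕ,
      Tendsto (fun k : ℕ => Ph n (f^[k] y)) atTop (nhds (h' p ^ n)) := by
    intro y hy n
    have hfky : Tendsto (fun k : ℕ => f^[k] y) atTop (nhds p) :=
      tendsto_of_tendsto_of_tendsto_of_le_of_le' hptend hibtendp
        (Eventually.of_forall fun k => (memFgen y hy k).1.le)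
        (Eventually.of_forall fun k => (memFgen y hy k).2.le)
    have hfkyIcc : ∀ k : ℕ, f^[k] y ∈ Icc (0:ℝ) 1 := fun k => (fmaps.iterate k) (hIooIcc i j hy)
    have hin := tendsto_in _ _ hfkyIcc hfky
    have hterm : ∀ m : ℕ, Tendsto (fun k : ℕ => h' (h^[m] (f^[k] y))) atTop (nhds (h' p)) := by
      intro m
      have h1 : Tendsto (fun k : ℕ => h^[m] (f^[k] y)) atTop (nhds p) := by
        have h2 := ((hcontiter m p hpIcc).tendsto).comp hin
        rwa [hhit m] at h2
      have h2 : ∀ k, h^[m] (f^[k] y) ∈ Icc (0:ℝ) 1 := fun k => (hmaps.iterate m) (hfkyIcc k)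
      exact ((hh'cont p hpIcc).tendsto).comp (tendsto_in _ _ h2 h1)
    have h3 := tendsto_finset_prod (Finset.range n) (fun m _ => hterm m)
    simpa [Finset.prod_const, Finset.card_range] using h3
  have hp'pos : 0 < h' p := hh'pos p hpIcc
  have hsand : ∀ y ∈ Ioo (ia i j) (ib i j), ∀ n : ℕ,
      Real.exp (-M) * h' p ^ n ≤ Ph n y ∧ Ph n y ≤ Real.exp M * h' p ^ n := by
    intro y hy n
    have hyI : y ∈ Icc (0:ℝ) 1 := hIooIcc i j hy
    have hhny : h^[n] y ∈ Ioo (ia i j) (ib i j) := memHk y hy n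
    have hhnyI : h^[n] y ∈ Icc (0:ℝ) 1 := hIooIcc i j hhny
    have hub : ∀ k : ℕ, Ph n y ≤ Real.exp M * Ph n (f^[k] y) := by
      intro k
      have e1 := hconj y hy n k
      have d1 : Pf k y ≤ Real.exp M * Pf k (h^[n] y) := hdist y hy (h^[n] y) hhny k
      have hPfh := hPfpos k (h^[n] y) hhnyI
      have hPhp' : 0 < Ph n (f^[k] y) := hPhpos n _ ((fmaps.iterate k) hyI)
      have e2 : Ph n y * Pf k (h^[n] y) ≤ (Real.exp M * Ph n (f^[k] y)) * Pf k (h^[n] y) := by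
        calc Ph n y * Pf k (h^[n] y) = Ph n (f^[k] y) * Pf k y := by linarith [e1]
          _ ≤ Ph n (f^[k] y) * (Real.exp M * Pf k (h^[n] y)) :=
              mul_le_mul_of_nonneg_left d1 hPhp'.le
          _ = (Real.exp M * Ph n (f^[k] y)) * Pf k (h^[n] y) := by ring
      exact le_of_mul_le_mul_right e2 hPfh
    have hlb : ∀ k : ℕ, Real.exp (-M) * Ph n (f^[k] y) ≤ Ph n y := by
      intro k
      have e1 := hconj y hy n k
      have d1 : Pf k (h^[n] y) ≤ Real.exp M * Pf k y := hdist (h^[n] y) hhny y hy k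
      have hPfy := hPfpos k y hyI
      have e2 : Ph n (f^[k] y) * Pf k y ≤ (Real.exp M * Ph n y) * Pf k y := by
        calc Ph n (f^[k] y) * Pf k y = Pf k (h^[n] y) * Ph n y := e1
          _ ≤ (Real.exp M * Pf k y) * Ph n y :=
              mul_le_mul_of_nonneg_right d1 (hPhpos n y hyI).le
          _ = (Real.exp M * Ph n y) * Pf k y := by ring
      have e3 : Ph n (f^[k] y) ≤ Real.exp M * Ph n y := le_of_mul_le_mul_right e2 hPfy
      rw [Real.exp_neg, inv_mul_le_iff₀ (Real.exp_pos M)]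
      exact e3
    constructor
    · exact le_of_tendsto ((hlim y hy n).const_mul (Real.exp (-M))) (Eventually.of_forall hlb)
    · exact ge_of_tendsto ((hlim y hy n).const_mul (Real.exp M)) (Eventually.of_forall hub)
  have hMVT : ∀ n : ℕ, ∃ ξ ∈ Ioo (ia i j) (ib i j), Ph n ξ = 1 := by
    intro n
    have hfix_a : h^[n] (ia i j) = ia i j := Function.iterate_fixed (hhe i j).1 n
    have hfix_b : h^[n] (ib i j) = ib i j := Function.iterate_fixed (hhe i j).2 n
    obtain ⟨ξ, hξ, hξ1⟩ := exists_hasDerivAt_eq_slope (h^[n]) (Ph n) (hlt i j)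
      ((hcontiter n).mono (Icc_subset_Icc (hiaIcc i j).1 (hibIcc i j).2))
      (fun z hz => hDhAt n z (hsub i j hz))
    refine ⟨ξ, hξ, ?_⟩
    rw [hfix_a, hfix_b] at hξ1
    rw [hξ1]
    exact div_self (sub_pos.2 (hlt i j)).ne'
  have hp'1 : h' p = 1 := by
    by_contra hne
    rcases lt_or_gt_of_ne hne with hlt1 | hgt1
    · obtain ⟨n, hn⟩ := pow_unbounded_of_one_lt (Real.exp M) (one_lt_inv₀ hp'pos |>.2 hlt1)
      rw [inv_pow] at hn
      obtain ⟨ξ, hξ, hξ1⟩ := hMVT n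
      have hs := (hsand ξ hξ n).2
      rw [hξ1] at hs
      have ht : (0:ℝ) < h' p ^ n := pow_pos hp'pos n
      nlinarith [inv_mul_cancel₀ ht.ne', Real.exp_pos M]
    · obtain ⟨n, hn⟩ := pow_unbounded_of_one_lt (Real.exp M) hgt1
      obtain ⟨ξ, hξ, hξ1⟩ := hMVT n
      have hs := (hsand ξ hξ n).1
      rw [hξ1] at hs
      rw [Real.exp_neg, inv_mul_le_iff₀ (Real.exp_pos M), mul_one] at hs
      linarith
  have hPh_lb : ∀ y ∈ Ioo (ia i j) (ib i j), ∀ n : ℕ, Real.exp (-M) ≤ Ph n y := by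
    intro y hy n
    have hs := (hsand y hy n).1
    rwa [hp'1, one_pow, mul_one] at hs
  -- endgame
  have hexpneg : (0:ℝ) < Real.exp (-M) := Real.exp_pos _
  rcases lt_trichotomy (h x) x with hcase | hcase | hcase
  · -- h x < x
    set d : ℝ := x - h x with hddef
    have hd : 0 < d := by simp [hddef]; linarith
    have hhxI : h x ∈ Ioo (ia i j) (ib i j) := memH x hx
    have claim : ∀ N : ℕ, (N:ℝ) * (Real.exp (-M) * d) ≤ x - h^[N] x := by
      intro N; induction N with
      | zero => simp
      | succ N ih =>
        obtain ⟨ξ, hξ, hξ1⟩ := exists_hasDerivAt_eq_slope (h^[N]) (Ph N) hcase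
          ((hcontiter N).mono (Icc_subset_Icc (hIooIcc i j hhxI).1 (hIooIcc i j hx).2))
          (fun z hz => hDhAt N z (hsub i j ⟨hhxI.1.trans hz.1, hz.2.trans hx.2⟩))
        have hξI : ξ ∈ Ioo (ia i j) (ib i j) := ⟨hhxI.1.trans hξ.1, hξ.2.trans hx.2⟩
        have hstep : h^[N] x - h^[N] (h x) = Ph N ξ * d := by
          rw [hξ1, hddef]
          field_simp
        have hlb := hPh_lb ξ hξI N
        have h1 : Real.exp (-M) * d ≤ h^[N] x - h^[N] (h x) := by
          rw [hstep]
          exact mul_le_mul_of_nonneg_right hlb hd.le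
        rw [Function.iterate_succ_apply]
        push_cast
        linarith
    obtain ⟨N, hN⟩ := exists_nat_gt ((x - ia i j) / (Real.exp (-M) * d))
    have h2 := claim N
    have h3 : ia i j < h^[N] x := (memHk x hx N).1
    have h4 : (x - ia i j) < N * (Real.exp (-M) * d) :=
      (div_lt_iff₀ (by positivity)).1 hN
    linarith
  · exact hcase
  · -- x < h x
    set d : ℝ := h x - x with hddef
    have hd : 0 < d := by simp [hddef]; linarith
    have hhxI : h x ∈ Ioo (ia i j) (ib i j) := memH x hx
    have claim : ∀ N : ℕ, (N:ℝ) * (Real.exp (-M) * d) ≤ h^[N] x - x := by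
      intro N; induction N with
      | zero => simp
      | succ N ih =>
        obtain ⟨ξ, hξ, hξ1⟩ := exists_hasDerivAt_eq_slope (h^[N]) (Ph N) hcase
          ((hcontiter N).mono (Icc_subset_Icc (hIooIcc i j hx).1 (hIooIcc i j hhxI).2))
          (fun z hz => hDhAt N z (hsub i j ⟨hx.1.trans hz.1, hz.2.trans hhxI.2⟩))
        have hξI : ξ ∈ Ioo (ia i j) (ib i j) := ⟨hx.1.trans hξ.1, hξ.2.trans hhxI.2⟩
        have hstep : h^[N] (h x) - h^[N] x = Ph N ξ * d := by
          rw [hξ1, hddef]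
          field_simp
        have hlb := hPh_lb ξ hξI N
        have h1 : Real.exp (-M) * d ≤ h^[N] (h x) - h^[N] x := by
          rw [hstep]
          exact mul_le_mul_of_nonneg_right hlb hd.le
        rw [Function.iterate_succ_apply]
        push_cast
        linarith
    obtain ⟨N, hN⟩ := exists_nat_gt ((ib i j - x) / (Real.exp (-M) * d))
    have h2 := claim N
    have h3 : h^[N] x < ib i j := (memHk x hx N).2
    have h4 : (ib i j - x) < N * (Real.exp (-M) * d) :=
      (div_lt_iff₀ (by positivity)).1 hN
    linarith
end

section
/- Let Γ be a countable group of circle homeomorphisms and μ a nondegenerate probability measure on Γ. If there exists ε₀ > 0 and an element h ∈ Γ such that for every g ∈ Γ one can find an element f ∈ Γ (a product of at most 2l elements of a fixed finite subset G of supp(μ), each of μ-mass at least ρ > 0) and an interval I of length ≤ ε₀ with (g f)(ν)(I) ≥ 1−ε₀, then for ℙ = μ^ℕ-almost every sequence ω = (g₁,g₂,…), it is not the case that g₁⋯g_{n+m}(ν)(I) < 1−ε₀ for all m ≥ 0 and all intervals I of length ≤ ε₀. (Quantitatively: the probability that the first n+2lt random compositions all fail the concentration condition is at most (1−ρ^{2l})ᵗ.)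 -/
open MeasureTheory ENNReal ProbabilityTheory

noncomputable instance {α : Type*} [TopologicalSpace α] : Group (α ≃ₜ α) where
  mul f g := g.trans f
  one := Homeomorph.refl α
  inv := Homeomorph.symm
  mul_assoc f g h := Homeomorph.ext fun _ => rfl
  one_mul f := Homeomorph.ext fun _ => rfl
  mul_one f := Homeomorph.ext fun _ => rfl
  inv_mul_cancel f := Homeomorph.ext fun x => f.symm_apply_apply x

/-- Left-to-right composition `h̄_n(ω) = g₁ ⋯ g_n` of a random sequence. -/
def randComp {Ω G : Type*} [Group G] (X : ℕ → Ω → G) (n : ℕ) (ω : Ω) : G :=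
  ((List.range n).map fun i => X i ω).prod

set_option linter.unusedSectionVars false

section AuxAntonov
variable {H : Type*} [Group H] [Countable H]
def wprod (f : ℕ → H) (m : ℕ) : H := ((List.range m).map f).prod

def fext {N : ℕ} (γ : Fin N → H) : ℕ → H := fun i => if h : i < N then γ ⟨i, h⟩ else 1

lemma wprod_congr {f g : ℕ → H} {m : ℕ} (h : ∀ i < m, f i = g i) : wprod f m = wprod g m := by
  unfold wprod
  congr 1
  exact List.map_congr_left fun a ha => h a (List.mem_range.mp ha)

lemma wprod_add (f : ℕ → H) (a b : ℕ) :
    wprod f (a + b) = wprod f a * ((List.range b).map fun j => f (a + j)).prod := by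
  unfold wprod
  rw [List.range_add, List.map_append, List.prod_append, List.map_map]
  rfl

lemma range_map_eq_ofFn {k : ℕ} (w : Fin k → H) (f : ℕ → H) (hf : ∀ j : Fin k, f j = w j) :
    (List.range k).map f = List.ofFn w := by
  apply List.ext_getElem (by simp)
  intro i h1 h2
  simp at h1 ⊢
  exact hf ⟨i, h1⟩

lemma tsum_pi_prod (μ : H → ℝ≥0∞) : ∀ L : ℕ, ∑' f : Fin L → H, ∏ j, μ (f j) = (∑' g, μ g) ^ L
  | 0 => by
    rw [tsum_eq_single (fun i => i.elim0)]
    · simp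
    · intro b hb; exact absurd (funext fun i => i.elim0) hb
  | (L + 1) => by
    rw [← Equiv.tsum_eq (Fin.consEquiv fun _ : Fin (L+1) => H), ENNReal.tsum_prod']
    have key : ∀ (g : H) (f : Fin L → H),
        (∏ j : Fin (L+1), μ ((Fin.consEquiv fun _ => H) (g, f) j)) = μ g * ∏ j, μ (f j) := by
      intro g f
      rw [Fin.prod_univ_succ]
      simp [Fin.consEquiv]
    simp only [key]
    simp only [ENNReal.tsum_mul_left, ENNReal.tsum_mul_right]
    rw [tsum_pi_prod μ L, pow_succ, mul_comm]

open Classical in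
lemma key_bound (μ : H → ℝ≥0∞) (hμ1 : ∑' g, μ g = 1)
    (C : H → Prop) (G : Finset H) (g₀ : H) (hg₀ : g₀ ∈ G) (L : ℕ) (ρ : ℝ≥0∞)
    (hρ1 : ρ ≤ 1) (hGρ : ∀ f ∈ G, ρ ≤ μ f)
    (hmain : ∀ g : H, ∃ k, k ≤ L ∧ ∃ w : Fin k → H, (∀ i, w i ∈ G) ∧
      C (g * (List.ofFn w).prod))
    (n : ℕ) :
    ∀ t N : ℕ, N = n + L * t →
      ∑' γ : Fin N → H,
        Set.indicator {γ : Fin N → H | ∀ m, n ≤ m → m ≤ N → ¬ C (wprod (fext γ) m)}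
          (fun γ => ∏ i, μ (γ i)) γ ≤ (1 - ρ ^ L) ^ t := by
  intro t
  induction t with
  | zero =>
    intro N hN
    calc ∑' γ : Fin N → H,
        Set.indicator {γ : Fin N → H | ∀ m, n ≤ m → m ≤ N → ¬ C (wprod (fext γ) m)}
          (fun γ => ∏ i, μ (γ i)) γ
        ≤ ∑' γ : Fin N → H, ∏ i, μ (γ i) :=
          ENNReal.tsum_le_tsum fun γ => Set.indicator_le_self' (fun _ _ => zero_le) γ
      _ = 1 := by rw [tsum_pi_prod μ N, hμ1, one_pow]
      _ = _ := (pow_zero _).symm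
  | succ t ih =>
    intro N hN
    rw [Nat.mul_succ] at hN
    have hN' : N = (n + L * t) + L := by omega
    subst hN'
    set M := n + L * t with hM
    set E : (Fin (M + L) → H) ≃ (Fin M → H) × (Fin L → H) :=
      (Equiv.arrowCongr finSumFinEquiv.symm (Equiv.refl H)).trans
        (Equiv.sumArrowEquivProdArrow _ _ _) with hE
    have hEsymm : ∀ (γ : Fin M → H) (δ : Fin L → H) (i : Fin (M + L)),
        E.symm (γ, δ) i = Sum.elim γ δ (finSumFinEquiv.symm i) := by
      intro γ δ i
      simp [hE, Equiv.sumArrowEquivProdArrow, Equiv.arrowCongr]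
    have f1 : ∀ (γ : Fin M → H) (δ : Fin L → H) (i : ℕ), i < M →
        fext (E.symm (γ, δ)) i = fext γ i := by
      intro γ δ i hi
      have hiL : i < M + L := by omega
      have hcast : (⟨i, hiL⟩ : Fin (M + L)) = Fin.castAdd L ⟨i, hi⟩ := rfl
      simp only [fext, hi, hiL, dif_pos, hEsymm, hcast, finSumFinEquiv_symm_apply_castAdd,
        Sum.elim_inl]
    have f2 : ∀ (γ : Fin M → H) (δ : Fin L → H) (j : ℕ) (hj : j < L),
        fext (E.symm (γ, δ)) (M + j) = δ ⟨j, hj⟩ := by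
      intro γ δ j hj
      have h1 : M + j < M + L := by omega
      have hcast : (⟨M + j, h1⟩ : Fin (M + L)) = Fin.natAdd M ⟨j, hj⟩ := rfl
      simp only [fext, h1, dif_pos, hEsymm, hcast, finSumFinEquiv_symm_apply_natAdd,
        Sum.elim_inr]
    have f3 : ∀ (γ : Fin M → H) (δ : Fin L → H),
        (∏ i : Fin (M + L), μ (E.symm (γ, δ) i)) = (∏ i, μ (γ i)) * ∏ j, μ (δ j) := by
      intro γ δ
      rw [Fintype.prod_equiv finSumFinEquiv.symm (fun i => μ (E.symm (γ, δ) i))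
        (fun s => μ (Sum.elim γ δ s)) (fun i => by
          show μ (E.symm (γ, δ) i) = μ (Sum.elim γ δ (finSumFinEquiv.symm i))
          rw [hEsymm]), Fintype.prod_sum_type]
      simp
    have hw1 : ∀ (γ : Fin M → H) (δ : Fin L → H) (m : ℕ), m ≤ M →
        wprod (fext (E.symm (γ, δ))) m = wprod (fext γ) m :=
      fun γ δ m hm => wprod_congr fun i hi => f1 γ δ i (lt_of_lt_of_le hi hm)
    calc ∑' γ' : Fin (M + L) → H,
        Set.indicator {γ' : Fin (M+L) → H | ∀ m, n ≤ m → m ≤ M + L → ¬ C (wprod (fext γ') m)}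
          (fun γ' => ∏ i, μ (γ' i)) γ'
        = ∑' p : (Fin M → H) × (Fin L → H),
            Set.indicator {γ' : Fin (M+L) → H | ∀ m, n ≤ m → m ≤ M + L → ¬ C (wprod (fext γ') m)}
              (fun γ' => ∏ i, μ (γ' i)) (E.symm p) := (Equiv.tsum_eq E.symm _).symm
      _ = ∑' (γ : Fin M → H), ∑' (δ : Fin L → H),
            Set.indicator {γ' : Fin (M+L) → H | ∀ m, n ≤ m → m ≤ M + L → ¬ C (wprod (fext γ') m)}
              (fun γ' => ∏ i, μ (γ' i)) (E.symm (γ, δ)) := ENNReal.tsum_prod'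
      _ ≤ ∑' (γ : Fin M → H),
            Set.indicator {γ : Fin M → H | ∀ m, n ≤ m → m ≤ M → ¬ C (wprod (fext γ) m)}
              (fun γ => ∏ i, μ (γ i)) γ * (1 - ρ ^ L) := by
          refine ENNReal.tsum_le_tsum fun γ => ?_
          obtain ⟨k, hk, w, hwG, hCw⟩ := hmain (wprod (fext γ) M)
          by_cases hbad : γ ∈ {γ : Fin M → H | ∀ m, n ≤ m → m ≤ M → ¬ C (wprod (fext γ) m)}
          · rw [Set.indicator_of_mem hbad]
            have hA : ρ ^ L ≤ ∑' δ : Fin L → H,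
                (if ∀ j : Fin k, δ (Fin.castLE hk j) = w j then ∏ j, μ (δ j) else 0) := by
              refine le_trans ?_ (ENNReal.le_tsum (fun j : Fin L =>
                if h : (j : ℕ) < k then w ⟨j, h⟩ else g₀))
              rw [if_pos]
              · calc ρ ^ L = ∏ _j : Fin L, ρ := by
                      rw [Finset.prod_const, Finset.card_univ, Fintype.card_fin]
                  _ ≤ _ := Finset.prod_le_prod' fun j _ => by
                      by_cases h : (j : ℕ) < k
                      · simp only [h, dif_pos]; exact hGρ _ (hwG _)
                      · simp only [h, dif_neg, not_false_iff]; exact hGρ _ hg₀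
              · intro j
                simp only [Fin.coe_castLE, j.2, dif_pos]
            have htot : (∑' δ : Fin L → H,
                  (if ∀ j : Fin k, δ (Fin.castLE hk j) = w j then ∏ j, μ (δ j) else 0)) +
                (∑' δ : Fin L → H,
                  (if ∀ j : Fin k, δ (Fin.castLE hk j) = w j then 0 else ∏ j, μ (δ j))) = 1 := by
              rw [← ENNReal.tsum_add]
              have hpt : ∀ δ : Fin L → H,
                  ((if ∀ j : Fin k, δ (Fin.castLE hk j) = w j then ∏ j, μ (δ j) else 0) +
                   (if ∀ j : Fin k, δ (Fin.castLE hk j) = w j then 0 else ∏ j, μ (δ j)))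
                    = ∏ j, μ (δ j) := by
                intro δ; split <;> simp
              rw [tsum_congr hpt, tsum_pi_prod μ L, hμ1, one_pow]
            have hB : (∑' δ : Fin L → H,
                (if ∀ j : Fin k, δ (Fin.castLE hk j) = w j then 0 else ∏ j, μ (δ j)))
                  ≤ 1 - ρ ^ L := by
              refine ENNReal.le_sub_of_add_le_left (by
                exact ne_top_of_le_ne_top one_ne_top (pow_le_one' hρ1 L)) ?_
              calc ρ ^ L + _ ≤ _ + _ := add_le_add_left hA _
                _ = 1 := htot
            have hptwise : ∀ δ : Fin L → H,
                Set.indicator {γ' : Fin (M+L) → H | ∀ m, n ≤ m → m ≤ M + L → ¬ C (wprod (fext γ') m)}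
                  (fun γ' => ∏ i, μ (γ' i)) (E.symm (γ, δ)) ≤
                (∏ i, μ (γ i)) *
                  (if ∀ j : Fin k, δ (Fin.castLE hk j) = w j then 0 else ∏ j, μ (δ j)) := by
              intro δ
              by_cases hδ : ∀ j : Fin k, δ (Fin.castLE hk j) = w j
              · rw [Set.indicator_of_notMem, if_pos hδ, mul_zero]
                intro hmem
                have heq : wprod (fext (E.symm (γ, δ))) (M + k) =
                    wprod (fext γ) M * (List.ofFn w).prod := by
                  rw [wprod_add, hw1 γ δ M le_rfl]
                  refine congrArg (wprod (fext γ) M * ·) (congrArg List.prod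
                    (range_map_eq_ofFn w _ fun j => ?_))
                  rw [f2 γ δ j (lt_of_lt_of_le j.2 hk)]
                  exact hδ j
                exact hmem (M + k) (by omega) (by omega) (heq ▸ hCw)
              · rw [if_neg hδ]
                calc Set.indicator
                      {γ' : Fin (M+L) → H | ∀ m, n ≤ m → m ≤ M + L → ¬ C (wprod (fext γ') m)}
                      (fun γ' => ∏ i, μ (γ' i)) (E.symm (γ, δ))
                      ≤ ∏ i : Fin (M+L), μ (E.symm (γ, δ) i) :=
                      Set.indicator_le_self' (fun _ _ => zero_le) _
                  _ = _ := f3 γ δ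
            calc ∑' δ : Fin L → H,
                Set.indicator {γ' : Fin (M+L) → H | ∀ m, n ≤ m → m ≤ M + L → ¬ C (wprod (fext γ') m)}
                  (fun γ' => ∏ i, μ (γ' i)) (E.symm (γ, δ))
                ≤ ∑' δ : Fin L → H, (∏ i, μ (γ i)) *
                    (if ∀ j : Fin k, δ (Fin.castLE hk j) = w j then 0 else ∏ j, μ (δ j)) :=
                  ENNReal.tsum_le_tsum hptwise
              _ = (∏ i, μ (γ i)) * ∑' δ : Fin L → H,
                    (if ∀ j : Fin k, δ (Fin.castLE hk j) = w j then 0 else ∏ j, μ (δ j)) :=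
                  ENNReal.tsum_mul_left
              _ ≤ (∏ i, μ (γ i)) * (1 - ρ ^ L) := mul_le_mul_right hB _
          · rw [Set.indicator_of_notMem hbad, zero_mul]
            have hz : ∀ δ : Fin L → H,
                Set.indicator {γ' : Fin (M+L) → H | ∀ m, n ≤ m → m ≤ M + L → ¬ C (wprod (fext γ') m)}
                  (fun γ' => ∏ i, μ (γ' i)) (E.symm (γ, δ)) = 0 := by
              intro δ
              rw [Set.indicator_of_notMem]
              intro hmem
              exact hbad fun m hm1 hm2 => by
                rw [← hw1 γ δ m hm2]
                exact hmem m hm1 (by omega)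
            simp only [hz, tsum_zero, le_refl]
      _ = (∑' γ : Fin M → H,
            Set.indicator {γ : Fin M → H | ∀ m, n ≤ m → m ≤ M → ¬ C (wprod (fext γ) m)}
              (fun γ => ∏ i, μ (γ i)) γ) * (1 - ρ ^ L) := ENNReal.tsum_mul_right
      _ ≤ (1 - ρ ^ L) ^ t * (1 - ρ ^ L) := mul_le_mul_left (ih M rfl) _
      _ = (1 - ρ ^ L) ^ (t + 1) := (pow_succ _ _).symm
end AuxAntonov

theorem stmt_14' {Ω : Type*} [MeasureSpace Ω] [IsProbabilityMeasure (ℙ : Measure Ω)]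
    {Γ : Type*} [Group Γ] [Countable Γ]
    (μ : Γ → ℝ≥0∞) (hμ1 : ∑' g : Γ, μ g = 1)
    (X : ℕ → Ω → Γ)
    (hiid : ∀ n : ℕ, ∀ γ : Fin n → Γ,
      ℙ {ω : Ω | ∀ i : Fin n, X i ω = γ i} = ∏ i : Fin n, μ (γ i))
    (C : Γ → Prop)
    (G : Finset Γ) (l : ℕ) (ρ : ℝ≥0∞) (hρ : 0 < ρ)
    (hGρ : ∀ f ∈ G, ρ ≤ μ f)
    (hmain : ∀ g : Γ, ∃ k, k ≤ 2 * l ∧ ∃ w : Fin k → Γ, (∀ i, w i ∈ G) ∧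
      C (g * (List.ofFn w).prod))
    (n : ℕ) :
    ∀ᵐ ω ∂(ℙ : Measure Ω), ∃ m : ℕ, C (randComp X (n + m) ω) := by
  classical
  rcases G.eq_empty_or_nonempty with hGe | ⟨g₀, hg₀⟩
  · refine Filter.Eventually.of_forall fun ω => ⟨0, ?_⟩
    obtain ⟨k, hk, w, hw, hc⟩ := hmain (randComp X (n + 0) ω)
    match k, w, hw, hc with
    | 0, w, hw, hc => simpa using hc
    | (k+1), w, hw, hc => exact absurd (hw 0) (by simp [hGe])
  · set ρ' := min ρ 1 with hρ'def
    have hρ'0 : 0 < ρ' := lt_min hρ zero_lt_one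
    have hρ'1 : ρ' ≤ 1 := min_le_right _ _
    have hGρ' : ∀ f ∈ G, ρ' ≤ μ f := fun f hf => (min_le_left _ _).trans (hGρ f hf)
    rw [ae_iff]
    refine le_antisymm ?_ (zero_le)
    have hlim : Filter.Tendsto (fun t : ℕ => (1 - ρ' ^ (2 * l)) ^ t) Filter.atTop (nhds 0) :=
      ENNReal.tendsto_pow_atTop_nhds_zero_of_lt_one
        (ENNReal.sub_lt_self one_ne_top one_ne_zero (pow_ne_zero _ hρ'0.ne'))
    refine ge_of_tendsto' hlim fun t => ?_
    set N := n + 2 * l * t with hN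
    have hsub : {ω : Ω | ¬ ∃ m, C (randComp X (n + m) ω)} ⊆
        ⋃ γ : {γ : Fin N → Γ // ∀ m, n ≤ m → m ≤ N → ¬ C (wprod (fext γ) m)},
          {ω : Ω | ∀ i : Fin N, X i ω = γ.1 i} := by
      intro ω hω
      simp only [Set.mem_setOf_eq, not_exists] at hω
      refine Set.mem_iUnion.mpr ⟨⟨fun i => X i ω, ?_⟩, fun i => rfl⟩
      intro m hm1 hm2
      have h1 : wprod (fext fun i : Fin N => X i ω) m = wprod (fun i => X i ω) m := by
        refine wprod_congr fun i hi => ?_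
        simp [fext, lt_of_lt_of_le hi hm2]
      have h2 : wprod (fun i => X i ω) m = randComp X m ω := rfl
      rw [h1, h2]
      obtain ⟨m', rfl⟩ := Nat.exists_eq_add_of_le hm1
      exact hω m'
    calc ℙ {ω : Ω | ¬ ∃ m, C (randComp X (n + m) ω)}
        ≤ ℙ (⋃ γ : {γ : Fin N → Γ // ∀ m, n ≤ m → m ≤ N → ¬ C (wprod (fext γ) m)},
            {ω : Ω | ∀ i : Fin N, X i ω = γ.1 i}) := measure_mono hsub
      _ ≤ ∑' γ : {γ : Fin N → Γ // ∀ m, n ≤ m → m ≤ N → ¬ C (wprod (fext γ) m)},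
            ℙ {ω : Ω | ∀ i : Fin N, X i ω = γ.1 i} := measure_iUnion_le _
      _ = ∑' γ : {γ : Fin N → Γ // ∀ m, n ≤ m → m ≤ N → ¬ C (wprod (fext γ) m)},
            ∏ i, μ (γ.1 i) := tsum_congr fun γ => hiid N γ.1
      _ = ∑' γ : Fin N → Γ,
            Set.indicator {γ : Fin N → Γ | ∀ m, n ≤ m → m ≤ N → ¬ C (wprod (fext γ) m)}
              (fun γ => ∏ i, μ (γ i)) γ :=
          tsum_subtype {γ : Fin N → Γ | ∀ m, n ≤ m → m ≤ N → ¬ C (wprod (fext γ) m)}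
            (fun γ => ∏ i, μ (γ i))
      _ ≤ (1 - ρ' ^ (2 * l)) ^ t :=
          key_bound μ hμ1 C G g₀ hg₀ (2 * l) ρ' hρ'1 hGρ' hmain n t N hN

/-- The Borel–Cantelli estimate at the heart of Antonov's contraction theorem: if every
`g ∈ Γ` can be corrected by a bounded word `f` in the support of `μ` so that `(g f)(ν)`
concentrates mass `≥ 1-ε₀` on an interval of length `≤ ε₀`, then almost surely the random
left compositions `g₁⋯g_{n+m}(ν)` concentrate at some time `m`. -/
theorem stmt_14 {Ω : Type*} [MeasureSpace Ω] [IsProbabilityMeasure (ℙ : Measure Ω)]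
    (Γ : Subgroup (AddCircle (1:ℝ) ≃ₜ AddCircle (1:ℝ))) [Countable Γ]
    (μ : Γ → ℝ≥0∞) (hμ1 : ∑' g : Γ, μ g = 1)
    (hnd : Submonoid.closure {g : Γ | μ g ≠ 0} = ⊤)
    (X : ℕ → Ω → Γ)
    -- (X i) is an i.i.d. sequence with common law μ
    (hiid : ∀ n : ℕ, ∀ γ : Fin n → Γ,
      ℙ {ω : Ω | ∀ i : Fin n, X i ω = γ i} = ∏ i : Fin n, μ (γ i))
    (ν : Measure (AddCircle (1:ℝ))) [IsProbabilityMeasure ν]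
    (ε₀ : ℝ) (hε₀ : 0 < ε₀)
    (G : Finset Γ) (l : ℕ) (ρ : ℝ≥0∞) (hρ : 0 < ρ)
    (hGρ : ∀ f ∈ G, ρ ≤ μ f)
    (hmain : ∀ g : Γ, ∃ k, k ≤ 2 * l ∧ ∃ w : Fin k → Γ, (∀ i, w i ∈ G) ∧
      ∃ a b : ℝ, b - a ≤ ε₀ ∧
        ENNReal.ofReal (1 - ε₀) ≤
          Measure.map
            (⇑((↑(g * (List.ofFn w).prod) : AddCircle (1:ℝ) ≃ₜ AddCircle (1:ℝ)))) ν
            ((fun x : ℝ => (x : AddCircle (1:ℝ))) '' Set.Icc a b))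
    (n : ℕ) :
    ∀ᵐ ω ∂(ℙ : Measure Ω), ∃ m : ℕ, ∃ a b : ℝ, b - a ≤ ε₀ ∧
      ENNReal.ofReal (1 - ε₀) ≤
        Measure.map
          (⇑((↑(randComp X (n + m) ω) : AddCircle (1:ℝ) ≃ₜ AddCircle (1:ℝ)))) ν
          ((fun x : ℝ => (x : AddCircle (1:ℝ))) '' Set.Icc a b) := by
  classical
  set C : Γ → Prop := fun g => ∃ a b : ℝ, b - a ≤ ε₀ ∧
      ENNReal.ofReal (1 - ε₀) ≤
        Measure.map (⇑((g : AddCircle (1:ℝ) ≃ₜ AddCircle (1:ℝ)))) ν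
          ((fun x : ℝ => (x : AddCircle (1:ℝ))) '' Set.Icc a b) with hC
  have h := stmt_14' μ hμ1 X hiid C G l ρ hρ hGρ (by simp only [hC]; exact hmain) n
  filter_upwards [h] with ω hm
  obtain ⟨m, hm⟩ := hm
  rw [hC] at hm
  exact ⟨m, hm⟩
end

section
/- Let f : [a,d] → [a,d] and the compositions setting of the spring configuration: let (g_i)_{i≥1} be maps each equal to f or g (C^1 diffeomorphisms of a compact interval), ε ∈ (0,1/3), ε₁ > 0 such that whenever |y−z| ≤ ε₁ one has f'(y)/f'(z) ≤ (2−2ε)/(2−3ε) and g'(y)/g'(z) ≤ (2−2ε)/(2−3ε). Suppose C ≥ 1 and x ∈ [a,d] satisfy (g_n⋯g₁)'(x) ≤ C/(2−2ε)ⁿ for all n ≥ 0. Then for every y ∈ [a,d] with |y−x| ≤ ε₁/C and every n ≥ 0, (g_n⋯g₁)'(y) ≤ C/(2−3ε)ⁿ. -/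
open Set

/-- Hyperbolicity-propagation lemma (Lemma 4.3): if the derivatives of the random
compositions at `x` decay like `C/(2-2ε)ⁿ`, then at every point `y` with
`|y - x| ≤ ε₁/C` they decay like `C/(2-3ε)ⁿ`. -/
theorem stmt_18 (a d ε ε₁ C : ℝ) (had : a < d)
    (hε0 : 0 < ε) (hε3 : ε < 1/3) (hε₁ : 0 < ε₁) (hC : 1 ≤ C)
    (f g f' g' : ℝ → ℝ)
    (hfmaps : MapsTo f (Icc a d) (Icc a d))
    (hgmaps : MapsTo g (Icc a d) (Icc a d))
    (hfderiv : ∀ x ∈ Icc a d, HasDerivWithinAt f (f' x) (Icc a d) x)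
    (hgderiv : ∀ x ∈ Icc a d, HasDerivWithinAt g (g' x) (Icc a d) x)
    (hf'pos : ∀ x ∈ Icc a d, 0 < f' x)
    (hg'pos : ∀ x ∈ Icc a d, 0 < g' x)
    -- modulus of continuity at scale ε₁
    (hmodf : ∀ y ∈ Icc a d, ∀ z ∈ Icc a d, |y - z| ≤ ε₁ →
      f' y / f' z ≤ (2 - 2*ε) / (2 - 3*ε))
    (hmodg : ∀ y ∈ Icc a d, ∀ z ∈ Icc a d, |y - z| ≤ ε₁ →
      g' y / g' z ≤ (2 - 2*ε) / (2 - 3*ε))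
    -- each gs i is f or g, with ds i its derivative
    (gs ds : ℕ → ℝ → ℝ)
    (hgs : ∀ i, (gs i = f ∧ ds i = f') ∨ (gs i = g ∧ ds i = g'))
    -- H n = gs (n-1) ∘ ⋯ ∘ gs 0
    (H : ℕ → ℝ → ℝ)
    (hH0 : ∀ x, H 0 x = x)
    (hHs : ∀ n x, H (n+1) x = gs n (H n x))
    (x : ℝ) (hx : x ∈ Icc a d)
    (hhyp : ∀ n : ℕ, (∏ k ∈ Finset.range n, ds k (H k x)) ≤ C / (2 - 2*ε)^n) :
    ∀ y ∈ Icc a d, |y - x| ≤ ε₁ / C →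
      ∀ n : ℕ, (∏ k ∈ Finset.range n, ds k (H k y)) ≤ C / (2 - 3*ε)^n := by
  have h2ε : (0:ℝ) < 2 - 2*ε := by linarith
  have h3ε1 : (1:ℝ) ≤ 2 - 3*ε := by linarith
  have h3ε0 : (0:ℝ) < 2 - 3*ε := by linarith
  have hC0 : (0:ℝ) < C := lt_of_lt_of_le one_pos hC
  set r : ℝ := (2 - 2*ε) / (2 - 3*ε) with hr
  have hr0 : 0 < r := div_pos h2ε h3ε0
  have hHmaps : ∀ n, ∀ z ∈ Icc a d, H n z ∈ Icc a d := by
    intro n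
    induction n with
    | zero => intro z hz; rw [hH0]; exact hz
    | succ n ih =>
      intro z hz
      rw [hHs]
      rcases hgs n with ⟨h1, _⟩ | ⟨h1, _⟩
      · rw [h1]; exact hfmaps (ih z hz)
      · rw [h1]; exact hgmaps (ih z hz)
  have hds_pos : ∀ k, ∀ z ∈ Icc a d, 0 < ds k z := by
    intro k z hz
    rcases hgs k with ⟨_, h2⟩ | ⟨_, h2⟩
    · rw [h2]; exact hf'pos z hz
    · rw [h2]; exact hg'pos z hz
  have hds_mod : ∀ k, ∀ u ∈ Icc a d, ∀ v ∈ Icc a d, |u - v| ≤ ε₁ →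
      ds k u ≤ r * ds k v := by
    intro k u hu v hv huv
    rcases hgs k with ⟨_, h2⟩ | ⟨_, h2⟩
    · rw [h2]
      have hmv := hmodf u hu v hv huv
      have hv' := hf'pos v hv
      calc f' u = (f' u / f' v) * f' v := by field_simp
        _ ≤ r * f' v := mul_le_mul_of_nonneg_right hmv hv'.le
    · rw [h2]
      have hmv := hmodg u hu v hv huv
      have hv' := hg'pos v hv
      calc g' u = (g' u / g' v) * g' v := by field_simp
        _ ≤ r * g' v := mul_le_mul_of_nonneg_right hmv hv'.le
  have hHderiv : ∀ n, ∀ z ∈ Icc a d,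
      HasDerivWithinAt (H n) (∏ k ∈ Finset.range n, ds k (H k z)) (Icc a d) z := by
    intro n
    induction n with
    | zero =>
      intro z hz
      have hid : H 0 = id := funext hH0
      rw [hid]
      simpa using (hasDerivWithinAt_id z (Icc a d))
    | succ n ih =>
      intro z hz
      have hfun : H (n+1) = fun w => gs n (H n w) := funext (hHs n)
      rw [hfun, Finset.prod_range_succ]
      have hd : HasDerivWithinAt (gs n) (ds n (H n z)) (Icc a d) (H n z) := by
        rcases hgs n with ⟨h1, h2⟩ | ⟨h1, h2⟩
        · rw [h1, h2]; exact hfderiv _ (hHmaps n z hz)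
        · rw [h1, h2]; exact hgderiv _ (hHmaps n z hz)
      have hcomp := HasDerivWithinAt.comp z hd (ih z hz) (fun w hw => hHmaps n w hw)
      rw [mul_comm]
      exact hcomp
  have main : ∀ n, ∀ z ∈ Icc a d, |z - x| ≤ ε₁ / C →
      (∏ k ∈ Finset.range n, ds k (H k z)) ≤ C / (2 - 3*ε)^n := by
    intro n
    induction n using Nat.strong_induction_on with
    | _ n IH =>
      match n with
      | 0 =>
        intro z hz hzx
        simpa using (le_trans hC (le_refl C))
      | Nat.succ m =>
        intro z hz hzx
        have hclose : ∀ k, k ≤ m → |H k z - H k x| ≤ ε₁ := by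
          intro k hk
          set s := Icc a d ∩ Metric.closedBall x (ε₁ / C) with hs
          have hconv : Convex ℝ s := (convex_Icc a d).inter (convex_closedBall x _)
          have hxs : x ∈ s := ⟨hx, Metric.mem_closedBall.2 (by simp [dist_self]; positivity)⟩
          have hzs : z ∈ s := ⟨hz, Metric.mem_closedBall.2 (by rwa [Real.dist_eq])⟩
          have hbound : ∀ w ∈ s, ‖∏ j ∈ Finset.range k, ds j (H j w)‖ ≤ C / (2 - 3*ε)^k := by
            intro w hw
            have hw2 : |w - x| ≤ ε₁ / C := by
              have := hw.2; rwa [Metric.mem_closedBall, Real.dist_eq] at this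
            have hle := IH k (Nat.lt_succ_of_le hk) w hw.1 hw2
            have hpos : 0 < ∏ j ∈ Finset.range k, ds j (H j w) :=
              Finset.prod_pos (fun j _ => hds_pos j _ (hHmaps j w hw.1))
            rwa [Real.norm_eq_abs, abs_of_pos hpos]
          have hderiv' : ∀ w ∈ s, HasDerivWithinAt (H k)
              (∏ j ∈ Finset.range k, ds j (H j w)) s w :=
            fun w hw => (hHderiv k w hw.1).mono inter_subset_left
          have hmvt := hconv.norm_image_sub_le_of_norm_hasDerivWithin_le hderiv' hbound hxs hzs
          rw [Real.norm_eq_abs, Real.norm_eq_abs] at hmvt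
          have hpk : (1:ℝ) ≤ (2 - 3*ε)^k := one_le_pow₀ h3ε1
          have hpk0 : (0:ℝ) < (2 - 3*ε)^k := pow_pos h3ε0 k
          calc |H k z - H k x| ≤ C / (2 - 3*ε)^k * |z - x| := hmvt
            _ ≤ C / (2 - 3*ε)^k * (ε₁ / C) := by
                apply mul_le_mul_of_nonneg_left hzx (by positivity)
            _ = ε₁ / (2 - 3*ε)^k := by field_simp
            _ ≤ ε₁ := by
                rw [div_le_iff₀ hpk0]
                nlinarith
        have hstep : ∀ k ∈ Finset.range (m+1), ds k (H k z) ≤ r * ds k (H k x) := by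
          intro k hk
          exact hds_mod k _ (hHmaps k z hz) _ (hHmaps k x hx)
            (hclose k (Nat.lt_succ_iff.1 (Finset.mem_range.1 hk)))
        have hpne : ((2:ℝ) - 2*ε)^(m+1) ≠ 0 := by positivity
        have hpne3 : ((2:ℝ) - 3*ε)^(m+1) ≠ 0 := by positivity
        calc ∏ k ∈ Finset.range (m+1), ds k (H k z)
            ≤ ∏ k ∈ Finset.range (m+1), (r * ds k (H k x)) :=
              Finset.prod_le_prod (fun k hk => (hds_pos k _ (hHmaps k z hz)).le) hstep
          _ = r^(m+1) * ∏ k ∈ Finset.range (m+1), ds k (H k x) := by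
              rw [Finset.prod_mul_distrib, Finset.prod_const, Finset.card_range]
          _ ≤ r^(m+1) * (C / (2 - 2*ε)^(m+1)) :=
              mul_le_mul_of_nonneg_left (hhyp (m+1)) (pow_nonneg hr0.le _)
          _ = C / (2 - 3*ε)^(m+1) := by
              rw [hr, div_pow]
              rw [div_mul_div_comm, mul_comm ((2 - 2*ε)^(m+1)) C, mul_div_mul_right _ _ hpne]
  intro y hy hyx n
  exact main n y hy hyx
end
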